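/- arXiv:2112.14877 — 8 statements merged into one kernel-verified Lean document; each statement's English description precedes it below -/
import Mathlib

section
/- Let σ : ℝ → ℝ be continuous and suppose σ is a neural network approximate identity, i.e., there exist k ∈ ℕ with k ≥ 1 and real numbers α₁,…,α_k, w₁,…,w_k, b₁,…,b_k such that g(x) := Σ_{i=1}^{k} α_i σ(w_i x + b_i) belongs to L¹(ℝ) and ∫_ℝ g(x) dx ≠ 0. Then σ is universal on C_c([−1,1]): for every continuous f : ℝ → ℝ whose support is contained in [−1,1] and every ε > 0, there exist N ∈ ℕ and real numbers c_j, a_j, d_j (j = 1,…,N) such that sup_{x ∈ [−1,1]} |f(x) − Σ_{j=1}^{N} c_j σ(a_j x + d_j)| ≤ ε. -/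
open MeasureTheory Topology Filter

lemma nai_tail (g : ℝ → ℝ) (hg : Integrable (fun x => |g x|)) {ε : ℝ} (hε : 0 < ε) :
    ∃ R : ℝ, 0 < R ∧ ∫ s, Set.indicator {t : ℝ | R < |t|} (fun t => |g t|) s ≤ ε := by
  have hmeas : ∀ n : ℕ, AEStronglyMeasurable
      (Set.indicator {t : ℝ | (n : ℝ) < |t|} (fun t => |g t|)) volume := by
    intro n
    exact hg.aestronglyMeasurable.indicator
      (measurableSet_lt measurable_const continuous_abs.measurable)
  have hbound : ∀ n : ℕ, ∀ᵐ s : ℝ,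
      ‖Set.indicator {t : ℝ | (n : ℝ) < |t|} (fun t => |g t|) s‖ ≤ |g s| := by
    intro n
    filter_upwards with s
    by_cases hs : s ∈ {t : ℝ | (n : ℝ) < |t|}
    · simp [hs, abs_abs]
    · simp [hs, abs_nonneg]
  have hlim : ∀ᵐ s : ℝ, Filter.Tendsto
      (fun n : ℕ => Set.indicator {t : ℝ | (n : ℝ) < |t|} (fun t => |g t|) s)
      Filter.atTop (𝓝 ((fun _ => (0:ℝ)) s)) := by
    filter_upwards with s
    have : ∀ᶠ n : ℕ in Filter.atTop,
        Set.indicator {t : ℝ | (n : ℝ) < |t|} (fun t => |g t|) s = 0 := by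
      filter_upwards [Filter.eventually_ge_atTop ⌈|s|⌉₊] with n hn
      have : ¬ ((n : ℝ) < |s|) := not_lt.mpr ((Nat.le_ceil _).trans (by exact_mod_cast hn))
      simp [this]
    exact Filter.Tendsto.congr' (Filter.EventuallyEq.symm this) tendsto_const_nhds
  have := tendsto_integral_of_dominated_convergence (fun s => |g s|) hmeas hg hbound hlim
  rw [integral_zero] at this
  have h2 : ∀ᶠ n : ℕ in Filter.atTop,
      ∫ s, Set.indicator {t : ℝ | (n : ℝ) < |t|} (fun t => |g t|) s < ε :=
    this.eventually_lt_const hε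
  obtain ⟨n, hn⟩ := h2.exists
  refine ⟨(n : ℝ) + 1, by positivity, ?_⟩
  have hle : ∫ s, Set.indicator {t : ℝ | (n : ℝ) + 1 < |t|} (fun t => |g t|) s
      ≤ ∫ s, Set.indicator {t : ℝ | (n : ℝ) < |t|} (fun t => |g t|) s := by
    apply integral_mono_of_nonneg
    · filter_upwards with s; exact Set.indicator_nonneg (fun t _ => abs_nonneg _) s
    · exact hg.indicator (measurableSet_lt measurable_const continuous_abs.measurable)
    · filter_upwards with s
      by_cases hs : s ∈ {t : ℝ | (n : ℝ) + 1 < |t|}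
      · have hs' : s ∈ {t : ℝ | (n : ℝ) < |t|} := by
          simp only [Set.mem_setOf_eq] at hs ⊢; linarith
        simp [hs, hs']
      · simp only [Set.indicator_of_notMem hs]
        exact Set.indicator_nonneg (fun t _ => abs_nonneg _) s
  linarith

set_option maxHeartbeats 1000000 in
/-- Any continuous neural network approximate identity (nAI) activation function is universal
in the space of continuous functions with support in `[-1,1]`: one-hidden-layer networks
with activation `σ` approximate such functions to arbitrary accuracy in the uniform norm. -/
theorem stmt_4 (σ : ℝ → ℝ) (hσ : Continuous σ)
    (k : ℕ) (hk : 1 ≤ k) (α w b : Fin k → ℝ)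
    (hg : Integrable (fun x : ℝ => ∑ i, α i * σ (w i * x + b i)))
    (hg0 : (∫ x : ℝ, ∑ i, α i * σ (w i * x + b i)) ≠ 0) :
    ∀ f : ℝ → ℝ, Continuous f → (∀ x : ℝ, x ∉ Set.Icc (-1 : ℝ) 1 → f x = 0) →
      ∀ ε : ℝ, 0 < ε →
        ∃ (N : ℕ) (c a d : Fin N → ℝ),
          ∀ x ∈ Set.Icc (-1 : ℝ) 1,
            |f x - ∑ j, c j * σ (a j * x + d j)| ≤ ε := by
  classical
  intro f hf hsupp ε hε
  set g : ℝ → ℝ := fun x => ∑ i, α i * σ (w i * x + b i) with hgdef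
  have hgc : Continuous g := by
    apply continuous_finset_sum
    intro i _
    exact continuous_const.mul (hσ.comp (by continuity))
  set I : ℝ := ∫ x, g x with hIdef
  have hI : I ≠ 0 := hg0
  have hIpos : 0 < |I| := abs_pos.mpr hI
  have hgint : Integrable g := hg
  have hgabs : Integrable fun x => |g x| := hgint.abs
  set A : ℝ := ∫ x, |g x| with hAdef
  have hA0 : 0 ≤ A := integral_nonneg fun x => abs_nonneg _
  set C : ℝ := A / |I| with hCdef
  have hC0 : 0 ≤ C := div_nonneg hA0 (abs_nonneg _)
  -- scaled kernel facts, with abstract δ r R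
  have key : ∀ δ r R : ℝ, 0 < δ → 0 < R → r = δ * R →
      (Integrable (fun t => (1 / (δ * I)) * g (t / δ))
      ∧ (∫ t, (1 / (δ * I)) * g (t / δ)) = 1
      ∧ (∫ t, |(1 / (δ * I)) * g (t / δ)|) = C
      ∧ (∫ t, Set.indicator {t : ℝ | r < |t|} (fun t => |(1 / (δ * I)) * g (t / δ)|) t)
          = (1 / |I|) * ∫ s, Set.indicator {t : ℝ | R < |t|} (fun t => |g t|) s) := by
    intro δ r R hδ hR hrR
    have hδ' : δ ≠ 0 := hδ.ne'
    refine ⟨(hgint.comp_div hδ').const_mul _, ?_, ?_, ?_⟩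
    · rw [integral_const_mul, Measure.integral_comp_div, smul_eq_mul,
        abs_of_pos hδ, ← hIdef]
      field_simp
    · have : ∀ t : ℝ, |(1 / (δ * I)) * g (t / δ)| = (1 / (δ * |I|)) * |g (t / δ)| := by
        intro t
        rw [abs_mul, abs_div, abs_mul, abs_of_pos hδ, abs_one]
      simp_rw [this]
      rw [integral_const_mul, Measure.integral_comp_div (fun x => |g x|),
        smul_eq_mul, abs_of_pos hδ, ← hAdef, hCdef]
      field_simp
    · have hpt : ∀ t : ℝ, Set.indicator {t : ℝ | r < |t|}
          (fun t => |(1 / (δ * I)) * g (t / δ)|) t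
          = (1 / (δ * |I|)) * Set.indicator {t : ℝ | R < |t|} (fun t => |g t|) (t / δ) := by
        intro t
        have hmem : (r < |t|) ↔ (R < |t / δ|) := by
          rw [abs_div, abs_of_pos hδ, lt_div_iff₀ hδ, hrR, mul_comm]
        by_cases ht : r < |t|
        · rw [Set.indicator_of_mem (by exact ht), Set.indicator_of_mem (by exact hmem.mp ht)]
          rw [abs_mul, abs_div, abs_mul, abs_of_pos hδ, abs_one]
        · rw [Set.indicator_of_notMem (by exact ht),
            Set.indicator_of_notMem (by exact fun h => ht (hmem.mpr h)), mul_zero]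
      simp_rw [hpt]
      rw [integral_const_mul,
        Measure.integral_comp_div
          (fun s => Set.indicator {t : ℝ | R < |t|} (fun t => |g t|) s),
        smul_eq_mul, abs_of_pos hδ]
      field_simp
  -- bound on f
  obtain ⟨M0, hM0⟩ := (isCompact_Icc (a := (-1:ℝ)) (b := 1)).exists_bound_of_continuousOn
    hf.continuousOn
  set M : ℝ := max M0 0 with hMdef
  have hMnonneg : 0 ≤ M := le_max_right _ _
  have hM : ∀ x, |f x| ≤ M := by
    intro x
    by_cases hx : x ∈ Set.Icc (-1:ℝ) 1
    · exact le_trans (by simpa using hM0 x hx) (le_max_left _ _)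
    · simp [hsupp x hx, hMnonneg]
  -- uniform continuity of f on [-2,2]
  set η : ℝ := ε / (4 * (C + 1)) with hηdef
  have hηpos : 0 < η := by positivity
  obtain ⟨r0, hr0pos, hr0⟩ := Metric.uniformContinuousOn_iff.mp
    ((isCompact_Icc (a := (-2:ℝ)) (b := 2)).uniformContinuousOn_of_continuous
      hf.continuousOn) η hηpos
  set r : ℝ := min (r0 / 2) 1 with hrdef
  have hrpos : 0 < r := lt_min (by linarith) one_pos
  have hr1 : r ≤ 1 := min_le_right _ _
  have hfr : ∀ u ∈ Set.Icc (-2:ℝ) 2, ∀ v ∈ Set.Icc (-2:ℝ) 2, |u - v| ≤ r → |f u - f v| ≤ η := by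
    intro u hu v hv huv
    have hd : dist u v < r0 := by
      rw [Real.dist_eq]
      calc |u - v| ≤ r := huv
        _ ≤ r0 / 2 := min_le_left _ _
        _ < r0 := by linarith
    have := hr0 u hu v hv hd
    rw [Real.dist_eq] at this
    exact this.le
  -- tail
  obtain ⟨R, hRpos, hRtail⟩ := nai_tail g hgabs
    (ε := ε * |I| / (8 * (M + 1))) (by positivity)
  set δ : ℝ := r / R with hδdef
  have hδpos : 0 < δ := div_pos hrpos hRpos
  have hrR : r = δ * R := by rw [hδdef]; field_simp
  obtain ⟨hGint, hG1, hGC, hGtail⟩ := key δ r R hδpos hRpos hrR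
  set G : ℝ → ℝ := fun t => (1 / (δ * I)) * g (t / δ) with hGdef
  have hGc : Continuous G := continuous_const.mul (hgc.comp (continuous_id.div_const δ))
  have hGabs : Integrable fun t => |G t| := hGint.abs
  have hGtail' : ∫ t, Set.indicator {t : ℝ | r < |t|} (fun t => |G t|) t
      ≤ ε / (8 * (M + 1)) := by
    rw [hGtail]
    calc (1 / |I|) * ∫ s, Set.indicator {t : ℝ | R < |t|} (fun t => |g t|) s
        ≤ (1 / |I|) * (ε * |I| / (8 * (M + 1))) := by
          apply mul_le_mul_of_nonneg_left hRtail (by positivity)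
      _ = ε / (8 * (M + 1)) := by field_simp
  -- the convolution
  set F : ℝ → ℝ := fun x => ∫ y, f y * G (x - y) with hFdef
  set ψ : ℝ → ℝ := fun t => Set.indicator {t : ℝ | r < |t|} (fun t => |G t|) t with hψdef
  have hψint : Integrable ψ :=
    hGabs.indicator (measurableSet_lt measurable_const continuous_abs.measurable)
  have hψnn : ∀ t, 0 ≤ ψ t := fun t => Set.indicator_nonneg (fun s _ => abs_nonneg _) t
  have stepA : ∀ x ∈ Set.Icc (-1:ℝ) 1, |F x - f x| ≤ ε / 2 := by
    intro x hx
    have hGx : Integrable fun y => G (x - y) := hGint.comp_sub_left x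
    have hGxabs : Integrable fun y => |G (x - y)| := hGx.abs
    have hψx : Integrable fun y => ψ (x - y) := hψint.comp_sub_left x
    have hint1 : Integrable fun y => f y * G (x - y) :=
      hGx.bdd_mul (c := M) hf.aestronglyMeasurable (ae_of_all _ fun y => by simpa using hM y)
    have hsub : F x - f x = ∫ y, (f y - f x) * G (x - y) := by
      have h1 : ∫ y, (f y - f x) * G (x - y)
          = (∫ y, f y * G (x - y)) - ∫ y, f x * G (x - y) := by
        simp_rw [sub_mul]
        exact integral_sub hint1 (hGx.const_mul _)
      have h2 : ∫ y, f x * G (x - y) = f x := by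
        rw [integral_const_mul, integral_sub_left_eq_self G volume x, hG1]
        ring
      rw [h1, h2]
    have hbd : ∀ y, ‖(f y - f x) * G (x - y)‖
        ≤ η * |G (x - y)| + (2 * M) * ψ (x - y) := by
      intro y
      rw [Real.norm_eq_abs, abs_mul]
      by_cases hy : |x - y| ≤ r
      · have hy2 : y ∈ Set.Icc (-2:ℝ) 2 := by
          obtain ⟨h1, h2⟩ := abs_le.mp hy
          constructor
          · linarith [hx.1, hr1]
          · linarith [hx.2, hr1]
        have hx2 : x ∈ Set.Icc (-2:ℝ) 2 := ⟨by linarith [hx.1], by linarith [hx.2]⟩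
        have h1 : |f y - f x| ≤ η := hfr y hy2 x hx2 (by rwa [abs_sub_comm])
        have h2 : 0 ≤ ψ (x - y) := hψnn _
        have h3 := mul_le_mul_of_nonneg_right h1 (abs_nonneg (G (x - y)))
        have h4 : 0 ≤ (2 * M) * ψ (x - y) := mul_nonneg (by linarith) h2
        linarith
      · have h1 : ψ (x - y) = |G (x - y)| :=
          Set.indicator_of_mem (by exact not_le.mp hy) _
        have h2 : |f y - f x| ≤ 2 * M := by
          calc |f y - f x| ≤ |f y| + |f x| := abs_sub _ _
            _ ≤ M + M := add_le_add (hM y) (hM x)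
            _ = 2 * M := by ring
        rw [h1]
        have h3 := mul_le_mul_of_nonneg_right h2 (abs_nonneg (G (x - y)))
        have h4 : 0 ≤ η * |G (x - y)| := mul_nonneg hηpos.le (abs_nonneg _)
        linarith
    calc |F x - f x| = ‖∫ y, (f y - f x) * G (x - y)‖ := by
          rw [hsub, Real.norm_eq_abs]
      _ ≤ ∫ y, (η * |G (x - y)| + (2 * M) * ψ (x - y)) :=
          norm_integral_le_of_norm_le
            ((hGxabs.const_mul η).add (hψx.const_mul (2 * M))) (ae_of_all _ hbd)
      _ = η * (∫ y, |G (x - y)|) + (2 * M) * ∫ y, ψ (x - y) := by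
          rw [integral_add (hGxabs.const_mul η) (hψx.const_mul (2 * M)),
            integral_const_mul, integral_const_mul]
      _ = η * C + (2 * M) * ∫ t, ψ t := by
          rw [integral_sub_left_eq_self (fun t => |G t|) volume x, hGC,
            integral_sub_left_eq_self ψ volume x]
      _ ≤ η * C + (2 * M) * (ε / (8 * (M + 1))) := by
          have := hGtail'
          have h3 : (2 * M) * (∫ t, ψ t) ≤ (2 * M) * (ε / (8 * (M + 1))) :=
            mul_le_mul_of_nonneg_left this (by positivity)
          linarith
      _ ≤ ε / 4 + ε / 4 := by
          have h1 : η * C ≤ ε / 4 := by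
            rw [hηdef, div_mul_eq_mul_div, div_le_div_iff₀ (by positivity) (by norm_num)]
            nlinarith
          have h2 : (2 * M) * (ε / (8 * (M + 1))) ≤ ε / 4 := by
            have heq : (2 * M) * (ε / (8 * (M + 1))) = (2 * M * ε) / (8 * (M + 1)) := by
              ring
            rw [heq, div_le_div_iff₀ (by positivity) (by norm_num)]
            nlinarith
          linarith
      _ = ε / 2 := by ring
  -- interval integral representation
  have hFx : ∀ x : ℝ, F x = ∫ y in (-1:ℝ)..1, f y * G (x - y) := by
    intro x
    rw [hFdef]
    rw [intervalIntegral.integral_of_le (by norm_num : (-1:ℝ) ≤ 1),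
      ← integral_Icc_eq_integral_Ioc]
    exact (setIntegral_eq_integral_of_forall_compl_eq_zero
      (fun y hy => by rw [hsupp y hy, zero_mul])).symm
  -- uniform continuity of the two-variable kernel
  have hHc : Continuous fun p : ℝ × ℝ => f p.2 * G (p.1 - p.2) :=
    (hf.comp continuous_snd).mul (hGc.comp (continuous_fst.sub continuous_snd))
  obtain ⟨d2, hd2pos, hd2⟩ := Metric.uniformContinuousOn_iff.mp
    (((isCompact_Icc (a := (-2:ℝ)) (b := 2)).prod
      (isCompact_Icc (a := (-2:ℝ)) (b := 2))).uniformContinuousOn_of_continuous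
      hHc.continuousOn) (ε / 4) (by positivity)
  -- choose N
  obtain ⟨N, hNgt⟩ := exists_nat_gt (2 / d2)
  have hNpos : 0 < (N : ℝ) := lt_trans (by positivity) hNgt
  have hNpos' : 0 < N := by exact_mod_cast hNpos
  have hNd2 : 2 / (N : ℝ) < d2 := by
    rw [div_lt_iff₀ hNpos, mul_comm]
    calc 2 = (2 / d2) * d2 := by field_simp
      _ < N * d2 := by apply mul_lt_mul_of_pos_right hNgt hd2pos
  set y : ℕ → ℝ := fun j => -1 + 2 * j / N with hydef
  have hy0 : y 0 = -1 := by simp [hydef]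
  have hyN : y N = 1 := by
    rw [hydef]
    field_simp
    norm_num
  have hystep : ∀ j : ℕ, y (j + 1) - y j = 2 / N := by
    intro j
    rw [hydef]
    push_cast
    field_simp
    ring
  have hymono : ∀ j : ℕ, y j < y (j + 1) := by
    intro j
    have h : 0 < y (j + 1) - y j := by rw [hystep j]; positivity
    exact sub_pos.mp h
  have hyin : ∀ j : ℕ, j ≤ N → y j ∈ Set.Icc (-1:ℝ) 1 := by
    intro j hj
    rw [hydef]
    have hj' : (j : ℝ) ≤ N := by exact_mod_cast hj
    constructor
    · have : 0 ≤ 2 * (j : ℝ) / N := by positivity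
      simp only []
      linarith
    · have : 2 * (j : ℝ) / N ≤ 2 := by
        rw [div_le_iff₀ hNpos]; linarith
      simp only []
      linarith
  -- step B : Riemann sums
  have stepB : ∀ x ∈ Set.Icc (-1:ℝ) 1,
      |F x - ∑ j ∈ Finset.range N, (2 / N) * (f (y j) * G (x - y j))| ≤ ε / 2 := by
    intro x hx
    have hcont : ∀ j : ℕ, IntervalIntegrable (fun t => f t * G (x - t)) volume (y j) (y (j+1)) :=
      fun j => (hf.mul (hGc.comp (continuous_const.sub continuous_id))).intervalIntegrable _ _
    have hadj : ∑ j ∈ Finset.range N, ∫ t in (y j)..(y (j+1)), f t * G (x - t)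
        = ∫ t in (y 0)..(y N), f t * G (x - t) :=
      intervalIntegral.sum_integral_adjacent_intervals (fun j _ => hcont j)
    have hFx2 : F x = ∑ j ∈ Finset.range N, ∫ t in (y j)..(y (j+1)), f t * G (x - t) := by
      rw [hadj, hy0, hyN, hFx x]
    rw [hFx2, ← Finset.sum_sub_distrib]
    have hterm : ∀ j ∈ Finset.range N,
        |(∫ t in (y j)..(y (j+1)), f t * G (x - t)) - (2 / N) * (f (y j) * G (x - y j))|
          ≤ (ε / 4) * (2 / N) := by
      intro j hj
      have hjN : j < N := Finset.mem_range.mp hj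
      have hyj : y j ∈ Set.Icc (-1:ℝ) 1 := hyin j hjN.le
      have hyj1 : y (j + 1) ∈ Set.Icc (-1:ℝ) 1 := hyin (j + 1) hjN
      have hconst : (2 / (N:ℝ)) * (f (y j) * G (x - y j))
          = ∫ _ in (y j)..(y (j+1)), f (y j) * G (x - y j) := by
        rw [intervalIntegral.integral_const, hystep j, smul_eq_mul]
      rw [hconst, ← intervalIntegral.integral_sub (hcont j)
        (intervalIntegrable_const)]
      have hle : ∀ t ∈ Set.uIoc (y j) (y (j + 1)),
          ‖f t * G (x - t) - f (y j) * G (x - y j)‖ ≤ ε / 4 := by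
        intro t ht
        rw [Set.uIoc_of_le (hymono j).le] at ht
        have ht1 : y j < t := ht.1
        have ht2 : t ≤ y (j + 1) := ht.2
        have htIcc : t ∈ Set.Icc (-1:ℝ) 1 := ⟨le_trans hyj.1 ht1.le, le_trans ht2 hyj1.2⟩
        have hp : (x, t) ∈ Set.Icc (-2:ℝ) 2 ×ˢ Set.Icc (-2:ℝ) 2 := by
          constructor
          · exact ⟨by linarith [hx.1], by linarith [hx.2]⟩
          · exact ⟨by linarith [htIcc.1], by linarith [htIcc.2]⟩
        have hq : (x, y j) ∈ Set.Icc (-2:ℝ) 2 ×ˢ Set.Icc (-2:ℝ) 2 := by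
          constructor
          · exact ⟨by linarith [hx.1], by linarith [hx.2]⟩
          · exact ⟨by linarith [hyj.1], by linarith [hyj.2]⟩
        have hdist : dist ((x, t) : ℝ × ℝ) (x, y j) < d2 := by
          rw [Prod.dist_eq]
          have h1 : dist x x = 0 := dist_self x
          have h2 : dist t (y j) < d2 := by
            rw [Real.dist_eq, abs_of_pos (by linarith : (0:ℝ) < t - y j)]
            have := hystep j
            calc t - y j ≤ y (j + 1) - y j := by linarith
              _ = 2 / N := hystep j
              _ < d2 := hNd2
          rw [h1]
          exact max_lt (by linarith) h2
        have := hd2 (x, t) hp (x, y j) hq hdist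
        rw [Real.dist_eq] at this
        exact le_of_lt this
      calc ‖∫ t in (y j)..(y (j+1)), (f t * G (x - t) - f (y j) * G (x - y j))‖
          ≤ (ε / 4) * |y (j + 1) - y j| :=
            intervalIntegral.norm_integral_le_of_norm_le_const hle
        _ = (ε / 4) * (2 / N) := by
            rw [hystep j, abs_of_pos (by positivity)]
    calc |∑ j ∈ Finset.range N,
          ((∫ t in (y j)..(y (j+1)), f t * G (x - t)) - (2 / N) * (f (y j) * G (x - y j)))|
        ≤ ∑ j ∈ Finset.range N,
          |(∫ t in (y j)..(y (j+1)), f t * G (x - t)) - (2 / N) * (f (y j) * G (x - y j))| :=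
          Finset.abs_sum_le_sum_abs _ _
      _ ≤ ∑ _j ∈ Finset.range N, (ε / 4) * (2 / N) := Finset.sum_le_sum hterm
      _ = N * ((ε / 4) * (2 / N)) := by
          rw [Finset.sum_const, Finset.card_range, nsmul_eq_mul]
      _ = ε / 2 := by field_simp; ring
  -- assemble the network
  refine ⟨N * k,
    fun j => (2 / N) * f (y ((finProdFinEquiv.symm j).1 : ℕ))
      * ((1 / (δ * I)) * α (finProdFinEquiv.symm j).2),
    fun j => w (finProdFinEquiv.symm j).2 / δ,
    fun j => b (finProdFinEquiv.symm j).2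
      - w (finProdFinEquiv.symm j).2 * y ((finProdFinEquiv.symm j).1 : ℕ) / δ, ?_⟩
  intro x hx
  have hnet : ∑ j : Fin (N * k),
      ((2 / (N:ℝ)) * f (y ((finProdFinEquiv.symm j).1 : ℕ))
        * ((1 / (δ * I)) * α (finProdFinEquiv.symm j).2))
      * σ ((w (finProdFinEquiv.symm j).2 / δ) * x
        + (b (finProdFinEquiv.symm j).2
          - w (finProdFinEquiv.symm j).2 * y ((finProdFinEquiv.symm j).1 : ℕ) / δ))
      = ∑ j ∈ Finset.range N, (2 / N) * (f (y j) * G (x - y j)) := by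
    rw [Equiv.sum_comp finProdFinEquiv.symm
      (fun p : Fin N × Fin k => ((2 / (N:ℝ)) * f (y (p.1 : ℕ)) * ((1 / (δ * I)) * α p.2))
        * σ ((w p.2 / δ) * x + (b p.2 - w p.2 * y (p.1 : ℕ) / δ)))]
    rw [Fintype.sum_prod_type]
    rw [← Fin.sum_univ_eq_sum_range (fun j => (2 / (N:ℝ)) * (f (y j) * G (x - y j))) N]
    apply Finset.sum_congr rfl
    intro j _
    rw [hGdef]
    simp only []
    rw [hgdef]
    simp only []
    rw [Finset.mul_sum, Finset.mul_sum, Finset.mul_sum]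
    apply Finset.sum_congr rfl
    intro i _
    have harg : w i * ((x - y (j : ℕ)) / δ) + b i
        = w i / δ * x + (b i - w i * y (j : ℕ) / δ) := by
      field_simp
      ring
    rw [← harg]
    ring
  rw [hnet]
  have h1 := stepA x hx
  have h2 := stepB x hx
  have h3 : f x - ∑ j ∈ Finset.range N, (2 / (N:ℝ)) * (f (y j) * G (x - y j))
      = (f x - F x) + (F x - ∑ j ∈ Finset.range N, (2 / (N:ℝ)) * (f (y j) * G (x - y j))) := by
    ring
  rw [h3]
  calc |(f x - F x) + (F x - ∑ j ∈ Finset.range N, (2 / (N:ℝ)) * (f (y j) * G (x - y j)))|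
      ≤ |f x - F x| + |F x - ∑ j ∈ Finset.range N, (2 / (N:ℝ)) * (f (y j) * G (x - y j))| :=
        abs_add_le _ _
    _ ≤ ε / 2 + ε / 2 := by
        rw [abs_sub_comm (f x) (F x)]
        exact add_le_add h1 h2
    _ = ε := by ring
end

section
/- For q ∈ ℕ, r := q + 1, let B(x,h) := (1/q!) Σ_{i=0}^{r} (−1)^i (r choose i) RePU(q; x + (r/2 − i)h), and define the n-fold composition 𝔅 : ℝⁿ → ℝ by 𝔅(x₁) := B(x₁, 1) for n = 1 and 𝔅(x₁,…,x_n) := B(x_n, 𝔅(x₁,…,x_{n−1})) for n ≥ 2. Then: (i) 0 ≤ 𝔅(x) ≤ 1 for all x ∈ ℝⁿ; (ii) 𝔅 has compact support, i.e., there exist b₁,…,b_n > 0 such that 𝔅(x) = 0 whenever |x_i| > b_i for some i; and (iii) ∫_{ℝⁿ} 𝔅(x) dx ≤ 1, so 𝔅 ∈ L¹(ℝⁿ). -/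
open MeasureTheory


/-- truncated power -/
noncomputable def pp (p : ℕ) (x : ℝ) : ℝ := if 0 ≤ x then x ^ p else 0

lemma pp_of_neg {p : ℕ} {x : ℝ} (h : x < 0) : pp p x = 0 := by
  simp [pp, not_le.2 h]

lemma pp_of_nonneg {p : ℕ} {x : ℝ} (h : 0 ≤ x) : pp p x = x ^ p := by
  simp [pp, h]

lemma pp_nonneg (p : ℕ) (x : ℝ) : 0 ≤ pp p x := by
  rcases le_or_gt 0 x with h | h
  · rw [pp_of_nonneg h]; positivity
  · rw [pp_of_neg h]

lemma pp_monotone (p : ℕ) : Monotone (pp p) := by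
  intro a b hab
  rcases le_or_gt 0 a with ha | ha
  · rw [pp_of_nonneg ha, pp_of_nonneg (ha.trans hab)]
    exact pow_le_pow_left₀ ha hab p
  · rw [pp_of_neg ha]; exact pp_nonneg _ _

lemma pp_measurable (p : ℕ) : Measurable (pp p) :=
  (pp_monotone p).measurable

lemma pp_mul (p : ℕ) {c : ℝ} (hc : 0 < c) (x : ℝ) : pp p (c * x) = c ^ p * pp p x := by
  rcases le_or_gt 0 x with hx | hx
  · rw [pp_of_nonneg hx, pp_of_nonneg (by positivity), mul_pow]
  · rw [pp_of_neg hx, pp_of_neg (mul_neg_of_pos_of_neg hc hx), mul_zero]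

lemma pp_continuous (p : ℕ) (hp : 1 ≤ p) : Continuous (pp p) := by
  have : pp p = fun x => max x 0 ^ p := by
    funext x
    rcases le_or_gt 0 x with hx | hx
    · rw [pp_of_nonneg hx, max_eq_left hx]
    · rw [pp_of_neg hx, max_eq_right hx.le, zero_pow (by omega)]
  rw [this]
  exact (continuous_id.max continuous_const).pow p

lemma pp_hasDerivWithinAt (p : ℕ) (y : ℝ) :
    HasDerivWithinAt (pp (p + 1)) (((p : ℝ) + 1) * pp p y) (Set.Ici y) y := by
  rcases lt_trichotomy y 0 with hy | hy | hy
  · have : HasDerivAt (pp (p + 1)) 0 y := by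
      have hev : pp (p + 1) =ᶠ[nhds y] fun _ => (0 : ℝ) := by
        filter_upwards [eventually_lt_nhds hy] with z hz using pp_of_neg hz
      exact (hasDerivAt_const y (0 : ℝ)).congr_of_eventuallyEq hev
    rw [pp_of_neg hy, mul_zero]
    exact this.hasDerivWithinAt
  · subst hy
    have h2 : HasDerivWithinAt (fun z : ℝ => z ^ (p + 1))
        (((p : ℝ) + 1) * (0 : ℝ) ^ p) (Set.Ici 0) 0 := by
      simpa using (hasDerivAt_pow (p + 1) (0 : ℝ)).hasDerivWithinAt
    have heq : Set.EqOn (pp (p + 1)) (fun z : ℝ => z ^ (p + 1)) (Set.Ici 0) :=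
      fun z hz => pp_of_nonneg hz
    have := h2.congr heq (pp_of_nonneg le_rfl)
    rw [pp_of_nonneg le_rfl]
    exact this
  · have : HasDerivAt (pp (p + 1)) (((p : ℝ) + 1) * y ^ p) y := by
      have hev : pp (p + 1) =ᶠ[nhds y] fun z => z ^ (p + 1) := by
        filter_upwards [eventually_gt_nhds hy] with z hz using pp_of_nonneg hz.le
      refine HasDerivAt.congr_of_eventuallyEq ?_ hev
      simpa using hasDerivAt_pow (p + 1) y
    rw [pp_of_nonneg hy.le]
    exact this.hasDerivWithinAt

lemma pp_intervalIntegrable (p : ℕ) (a b : ℝ) : IntervalIntegrable (pp p) volume a b :=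
  (pp_monotone p).intervalIntegrable

lemma pp_integral (p : ℕ) (a b : ℝ) :
    ∫ t in a..b, pp p t = (pp (p + 1) b - pp (p + 1) a) / ((p : ℝ) + 1) := by
  have key : ∀ u v : ℝ, u ≤ v → ∫ t in u..v, (((p:ℝ)+1) * pp p t) = pp (p+1) v - pp (p+1) u := by
    intro u v huv
    refine intervalIntegral.integral_eq_sub_of_hasDeriv_right_of_le huv
      ((pp_continuous (p+1) (by omega)).continuousOn) (fun x _ => ?_) ?_
    · exact (pp_hasDerivWithinAt p x).mono Set.Ioi_subset_Ici_self
    · exact (pp_intervalIntegrable p u v).const_mul _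
  have hpos : ((p : ℝ) + 1) ≠ 0 := by positivity
  rcases le_total a b with hab | hab
  · have := key a b hab
    rw [intervalIntegral.integral_const_mul] at this
    field_simp
    linarith [this]
  · have := key b a hab
    rw [intervalIntegral.integral_const_mul] at this
    rw [intervalIntegral.integral_symm]
    field_simp
    linarith [this]

/-- centered cardinal B-spline of degree `s` -/
noncomputable def M (s : ℕ) (x : ℝ) : ℝ :=
  (1 / (s.factorial : ℝ)) * ∑ i ∈ Finset.range (s + 2),
    (-1 : ℝ) ^ i * (((s + 1).choose i : ℕ) : ℝ) * pp s (x + ((s : ℝ) + 1) / 2 - i)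

lemma M_measurable (s : ℕ) : Measurable (M s) := by
  unfold M
  refine Measurable.const_mul ?_ _
  refine Finset.measurable_sum _ fun i _ => ?_
  exact ((pp_measurable s).comp (by fun_prop)).const_mul _

lemma M_zero (x : ℝ) : M 0 x = if x ∈ Set.Ico (-(1/2) : ℝ) (1/2) then 1 else 0 := by
  unfold M
  rw [Finset.sum_range_succ, Finset.sum_range_one]
  simp only [Nat.factorial_zero, Nat.choose_self, Nat.choose_zero_right]
  push_cast
  rcases lt_or_ge x (-(1/2) : ℝ) with h | h
  · rw [pp_of_neg (by norm_num; linarith), pp_of_neg (by norm_num; linarith)]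
    rw [if_neg (by simp [Set.mem_Ico]; intro h'; linarith)]
    ring
  · rcases lt_or_ge x (1/2 : ℝ) with h2 | h2
    · rw [pp_of_nonneg (by norm_num; linarith), pp_of_neg (by norm_num; linarith)]
      rw [if_pos (by simp [Set.mem_Ico]; constructor <;> linarith)]
      norm_num
    · rw [pp_of_nonneg (by norm_num; linarith), pp_of_nonneg (by norm_num; linarith)]
      rw [if_neg (by simp [Set.mem_Ico]; intro h'; linarith)]
      norm_num

lemma sum_shift (r : ℕ) (Q : ℕ → ℝ) :
    ∑ i ∈ Finset.range (r + 1), (-1 : ℝ) ^ i * (r.choose (i + 1) : ℝ) * Q (i + 1)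
    = Q 0 - ∑ i ∈ Finset.range (r + 1), (-1 : ℝ) ^ i * (r.choose i : ℝ) * Q i := by
  rw [Finset.sum_range_succ' (fun i => (-1 : ℝ) ^ i * (r.choose i : ℝ) * Q i) r,
    Finset.sum_range_succ (fun i => (-1 : ℝ) ^ i * (r.choose (i + 1) : ℝ) * Q (i + 1)) r]
  rw [Nat.choose_succ_self]
  push_cast
  rw [eq_sub_iff_add_eq]
  have h0 : (∑ i ∈ Finset.range r, (-1 : ℝ) ^ i * (r.choose (i + 1) : ℝ) * Q (i + 1))
      + ∑ i ∈ Finset.range r, (-1 : ℝ) ^ (i + 1) * (r.choose (i + 1) : ℝ) * Q (i + 1) = 0 := by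
    rw [← Finset.sum_add_distrib]
    apply Finset.sum_eq_zero
    intro i _; ring
  push_cast
  push_cast at h0
  simp only [mul_zero, zero_mul, pow_zero, one_mul, add_zero, Nat.choose_zero_right, Nat.cast_one]
  linarith [h0]

/-- Pascal reorganization of the alternating sum. -/
lemma sum_pascal (r : ℕ) (P : ℕ → ℝ) :
    ∑ i ∈ Finset.range (r + 3), (-1 : ℝ) ^ i * ((r + 2).choose i : ℝ) * P i
    = ∑ i ∈ Finset.range (r + 2), (-1 : ℝ) ^ i * ((r + 1).choose i : ℝ) * (P i - P (i + 1)) := by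
  rw [Finset.sum_range_succ' (fun i => (-1 : ℝ) ^ i * ((r + 2).choose i : ℝ) * P i) (r + 2)]
  have hch : ∀ i, ((r + 2).choose (i + 1) : ℝ) = ((r + 1).choose i : ℝ) + ((r + 1).choose (i + 1) : ℝ) := by
    intro i; push_cast [Nat.choose_succ_succ]; ring
  have : ∀ i ∈ Finset.range (r + 2), (-1 : ℝ) ^ (i + 1) * ((r + 2).choose (i + 1) : ℝ) * P (i + 1)
      = -((-1 : ℝ) ^ i * ((r + 1).choose i : ℝ) * P (i + 1))
        - (-1 : ℝ) ^ i * ((r + 1).choose (i + 1) : ℝ) * P (i + 1) := by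
    intro i _; rw [hch]; ring
  have hr : ∀ i ∈ Finset.range (r + 2), (-1 : ℝ) ^ i * ((r + 1).choose i : ℝ) * (P i - P (i + 1))
      = (-1 : ℝ) ^ i * ((r + 1).choose i : ℝ) * P i
        - (-1 : ℝ) ^ i * ((r + 1).choose i : ℝ) * P (i + 1) := fun i _ => by ring
  rw [Finset.sum_congr rfl this, Finset.sum_sub_distrib, sum_shift (r + 1) P,
    Finset.sum_congr rfl hr, Finset.sum_sub_distrib, Finset.sum_neg_distrib]
  simp only [Nat.choose_zero_right, Nat.cast_one, pow_zero, one_mul]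
  linarith

lemma pp_antitone_sub (s : ℕ) (d : ℝ) : Antitone (fun t => pp s (d - t)) :=
  fun _ _ hab => pp_monotone s (sub_le_sub_left hab d)

/-- convolution recurrence for the B-spline, interval-integral form -/
lemma M_rec' (s : ℕ) (x : ℝ) :
    M (s + 1) x = ∫ t in (-(1/2) : ℝ)..(1/2 : ℝ), M s (x - t) := by
  have hint : ∀ d : ℝ, (∫ t in (-(1/2) : ℝ)..(1/2 : ℝ), pp s (d - t))
      = (pp (s + 1) (d + 1/2) - pp (s + 1) (d - 1/2)) / ((s : ℝ) + 1) := by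
    intro d
    rw [intervalIntegral.integral_comp_sub_left (pp s) d, pp_integral s (d - 1/2) (d - -(1/2))]
    norm_num
  have step1 : (∫ t in (-(1/2) : ℝ)..(1/2 : ℝ), M s (x - t))
      = ∫ t in (-(1/2) : ℝ)..(1/2 : ℝ), ((1 / (s.factorial : ℝ)) *
        ∑ i ∈ Finset.range (s + 2), (-1 : ℝ) ^ i * (((s + 1).choose i : ℕ) : ℝ) *
          pp s ((x + ((s : ℝ) + 1) / 2 - i) - t)) := by
    apply intervalIntegral.integral_congr
    intro t _
    simp only [M]
    congr 1
    apply Finset.sum_congr rfl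
    intro i _
    congr 2
    ring
  have swap := intervalIntegral.integral_finset_sum (μ := volume) (a := (-(1/2) : ℝ))
    (b := (1/2 : ℝ)) (s := Finset.range (s + 2))
    (f := fun i t => (-1 : ℝ) ^ i * (((s + 1).choose i : ℕ) : ℝ) *
      pp s ((x + ((s : ℝ) + 1) / 2 - i) - t))
    (fun i _ => ((pp_antitone_sub s (x + ((s : ℝ) + 1) / 2 - i)).intervalIntegrable).const_mul _)
  rw [step1, intervalIntegral.integral_const_mul, swap]
  have step2 : ∀ i ∈ Finset.range (s + 2),
      (∫ t in (-(1/2) : ℝ)..(1/2 : ℝ), (-1 : ℝ) ^ i * (((s + 1).choose i : ℕ) : ℝ) *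
        pp s ((x + ((s : ℝ) + 1) / 2 - i) - t))
      = (-1 : ℝ) ^ i * (((s + 1).choose i : ℕ) : ℝ) *
          (((fun j : ℕ => pp (s + 1) (x + ((s : ℝ) + 2) / 2 - j)) i
            - (fun j : ℕ => pp (s + 1) (x + ((s : ℝ) + 2) / 2 - j)) (i + 1))
            / ((s : ℝ) + 1)) := by
    intro i _
    rw [intervalIntegral.integral_const_mul, hint]
    simp only
    congr 3
    · ring
    · push_cast; ring
  rw [Finset.sum_congr rfl step2]
  have hL : M (s + 1) x = (1 / (((s + 1).factorial : ℕ) : ℝ)) *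
      ∑ i ∈ Finset.range (s + 3), (-1 : ℝ) ^ i * (((s + 2).choose i : ℕ) : ℝ) *
        (fun j : ℕ => pp (s + 1) (x + ((s : ℝ) + 2) / 2 - j)) i := by
    simp only [M]
    rw [show s + 1 + 2 = s + 3 from by ring, show s + 1 + 1 = s + 2 from by ring]
    congr 1
    apply Finset.sum_congr rfl
    intro i _
    congr 2
    push_cast
    ring
  rw [hL, sum_pascal s (fun j : ℕ => pp (s + 1) (x + ((s : ℝ) + 2) / 2 - j))]
  rw [Finset.mul_sum, Finset.mul_sum]
  apply Finset.sum_congr rfl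
  intro i _
  have h1 : (((s + 1).factorial : ℕ) : ℝ) = ((s : ℝ) + 1) * (s.factorial : ℝ) := by
    rw [Nat.factorial_succ]; push_cast; ring
  have h2 : (s.factorial : ℝ) ≠ 0 := Nat.cast_ne_zero.2 (Nat.factorial_ne_zero s)
  have h3 : ((s : ℝ) + 1) ≠ 0 := by positivity
  beta_reduce
  rw [h1]
  have helper : ∀ a f c D : ℝ, a ≠ 0 → f ≠ 0 →
      1 / (a * f) * (c * D) = 1 / f * (c * (D / a)) := by
    intro a f c D ha hf
    rw [div_mul_eq_mul_div, div_mul_eq_mul_div, one_mul, one_mul, div_eq_div_iff (by positivity) hf]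
    field_simp
  exact helper _ _ _ _ h3 h2

lemma M_bounds (s : ℕ) : ∀ x : ℝ, 0 ≤ M s x ∧ M s x ≤ 1 := by
  induction s with
  | zero => intro x; rw [M_zero]; split <;> norm_num
  | succ t ih =>
    have hii : ∀ x a b : ℝ, IntervalIntegrable (fun u => M t (x - u)) volume a b := by
      intro x a b
      rw [intervalIntegrable_iff]
      haveI : IsFiniteMeasure (volume.restrict (Set.uIoc a b)) := by
        constructor
        rw [Measure.restrict_apply_univ, Set.uIoc]
        exact measure_Ioc_lt_top
      apply Integrable.mono' (integrable_const (1 : ℝ))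
      · exact ((M_measurable t).comp (by fun_prop)).aestronglyMeasurable
      · filter_upwards with u
        rw [Real.norm_eq_abs, abs_le]
        exact ⟨by linarith [(ih (x - u)).1], (ih (x - u)).2⟩
    intro x
    refine ⟨?_, ?_⟩
    · rw [M_rec']
      exact intervalIntegral.integral_nonneg (by norm_num) (fun u _ => (ih (x - u)).1)
    · rw [M_rec']
      calc (∫ u in (-(1/2) : ℝ)..(1/2 : ℝ), M t (x - u))
          ≤ ∫ _ in (-(1/2) : ℝ)..(1/2 : ℝ), (1 : ℝ) :=
            intervalIntegral.integral_mono_on (by norm_num) (hii x _ _)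
              intervalIntegrable_const (fun u _ => (ih (x - u)).2)
        _ = 1 := by norm_num

lemma M_support (s : ℕ) : ∀ x : ℝ, ((s : ℝ) + 1) / 2 < |x| → M s x = 0 := by
  induction s with
  | zero =>
    intro x hx
    norm_num at hx
    rw [M_zero, if_neg]
    rw [Set.mem_Ico]
    push_neg
    intro h1
    rcases le_or_gt 0 x with h0 | h0
    · rw [abs_of_nonneg h0] at hx; linarith
    · rw [abs_of_neg h0] at hx; linarith
  | succ t ih =>
    intro x hx
    rw [M_rec']
    have : Set.EqOn (fun u => M t (x - u)) (fun _ => (0 : ℝ))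
        (Set.uIcc (-(1/2) : ℝ) (1/2 : ℝ)) := by
      intro u hu
      rw [Set.uIcc_of_le (by norm_num), Set.mem_Icc] at hu
      simp only
      apply ih
      push_cast at hx ⊢
      have h1 : |u| ≤ 1/2 := abs_le.2 ⟨by linarith [hu.1], hu.2⟩
      have h2 : |x| - |u| ≤ |x - u| := by
        have := abs_sub_abs_le_abs_sub x u
        linarith
      linarith
    rw [intervalIntegral.integral_congr this]
    simp

lemma M_abs_le_indicator (s : ℕ) (x : ℝ) :
    ‖M s x‖ ≤ Set.indicator (Set.Icc (-(((s : ℝ) + 1) / 2)) (((s : ℝ) + 1) / 2))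
      (fun _ => (1 : ℝ)) x := by
  rcases le_or_gt (|x|) (((s : ℝ) + 1) / 2) with h | h
  · rw [Set.indicator_of_mem (by rw [Set.mem_Icc]; exact abs_le.1 h)]
    rw [Real.norm_eq_abs, abs_le]
    exact ⟨by linarith [(M_bounds s x).1], (M_bounds s x).2⟩
  · rw [M_support s x h]
    simp only [norm_zero]
    exact Set.indicator_nonneg (fun _ _ => by norm_num) x

lemma indicator_Icc_integrable (a b : ℝ) :
    Integrable (Set.indicator (Set.Icc a b) (fun _ => (1 : ℝ))) := by
  rw [integrable_indicator_iff measurableSet_Icc]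
  exact integrableOn_const (lt_of_le_of_lt (le_of_eq (Real.volume_Icc)) ENNReal.ofReal_lt_top).ne

lemma M_integrable (s : ℕ) : Integrable (M s) := by
  apply Integrable.mono' (indicator_Icc_integrable _ _) (M_measurable s).aestronglyMeasurable
  filter_upwards with x using M_abs_le_indicator s x

lemma integral_indicator_Icc (a b : ℝ) (hab : a ≤ b) :
    (∫ x, Set.indicator (Set.Icc a b) (fun _ => (1 : ℝ)) x) = b - a := by
  rw [integral_indicator measurableSet_Icc, setIntegral_const, smul_eq_mul, mul_one,
    Real.volume_real_Icc_of_le hab]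

lemma M_integral (s : ℕ) : (∫ x, M s x) = 1 := by
  induction s with
  | zero =>
    have : M 0 = Set.indicator (Set.Ico (-(1/2) : ℝ) (1/2)) (fun _ => (1 : ℝ)) := by
      funext x
      rw [M_zero, Set.indicator_apply]
    rw [this, integral_indicator measurableSet_Ico, setIntegral_const, smul_eq_mul, mul_one,
      Real.volume_real_Ico_of_le (by norm_num)]
    norm_num
  | succ t ih =>
    set ind := Set.indicator (Set.Icc (-(1/2) : ℝ) (1/2)) (fun _ => (1 : ℝ)) with hind
    have conv_eq : M (t + 1) = fun x => convolution ind (M t) (ContinuousLinearMap.mul ℝ ℝ) volume x := by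
      funext x
      rw [M_rec']
      have h1 : ∀ u : ℝ, (ContinuousLinearMap.mul ℝ ℝ) (ind u) (M t (x - u))
          = Set.indicator (Set.Icc (-(1/2) : ℝ) (1/2)) (fun u => M t (x - u)) u := by
        intro u
        simp only [ContinuousLinearMap.mul_apply', hind]
        rw [Set.indicator_apply, Set.indicator_apply]
        split <;> simp
      show _ = ∫ u, (ContinuousLinearMap.mul ℝ ℝ) (ind u) (M t (x - u))
      simp_rw [h1]
      rw [integral_indicator measurableSet_Icc, integral_Icc_eq_integral_Ioc,
        ← intervalIntegral.integral_of_le (by norm_num : (-(1/2) : ℝ) ≤ 1/2)]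
    rw [conv_eq]
    rw [integral_convolution (L := ContinuousLinearMap.mul ℝ ℝ) (indicator_Icc_integrable _ _) (M_integrable t)]
    rw [integral_indicator_Icc _ _ (by norm_num), ih]
    norm_num

noncomputable def Bq (q : ℕ) (x h : ℝ) : ℝ :=
  (1 / (q.factorial : ℝ)) * ∑ i ∈ Finset.range (q + 2),
    (-1 : ℝ) ^ i * (((q + 1).choose i : ℕ) : ℝ) * pp q (x + (((q : ℝ) + 1) / 2 - i) * h)

lemma Bq_one (q : ℕ) (x : ℝ) : Bq q x 1 = M q x := by
  unfold Bq M
  congr 1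
  apply Finset.sum_congr rfl
  intro i _
  congr 2
  ring

lemma Bq_zero (q : ℕ) (x : ℝ) : Bq q x 0 = 0 := by
  unfold Bq
  have h1 : ∀ i ∈ Finset.range (q + 2),
      (-1 : ℝ) ^ i * (((q + 1).choose i : ℕ) : ℝ) * pp q (x + (((q : ℝ) + 1) / 2 - i) * 0)
      = (-1 : ℝ) ^ i * (((q + 1).choose i : ℕ) : ℝ) * pp q x := by
    intro i _; congr 2; ring
  rw [Finset.sum_congr rfl h1, ← Finset.sum_mul]
  have h2 : (∑ i ∈ Finset.range (q + 2), (-1 : ℝ) ^ i * (((q + 1).choose i : ℕ) : ℝ)) = 0 := by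
    have := Int.alternating_sum_range_choose_of_ne (show q + 1 ≠ 0 by omega)
    have hcast := congrArg (fun z : ℤ => (z : ℝ)) this
    push_cast at hcast
    convert hcast using 2
  rw [h2]
  ring

lemma Bq_scale (q : ℕ) {h : ℝ} (hpos : 0 < h) (x : ℝ) : Bq q x h = h ^ q * M q (x / h) := by
  unfold Bq M
  rw [Finset.mul_sum, Finset.mul_sum, Finset.mul_sum]
  apply Finset.sum_congr rfl
  intro i _
  have harg : x + (((q : ℝ) + 1) / 2 - i) * h = h * (x / h + ((q : ℝ) + 1) / 2 - i) := by
    field_simp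
    ring
  rw [harg, pp_mul q hpos]
  ring

lemma Bq_nonneg (q : ℕ) {h : ℝ} (h0 : 0 ≤ h) (x : ℝ) : 0 ≤ Bq q x h := by
  rcases eq_or_lt_of_le h0 with rfl | hpos
  · rw [Bq_zero]
  · rw [Bq_scale q hpos]
    exact mul_nonneg (by positivity) (M_bounds q _).1

lemma Bq_le_one (q : ℕ) {h : ℝ} (h0 : 0 ≤ h) (h1 : h ≤ 1) (x : ℝ) : Bq q x h ≤ 1 := by
  rcases eq_or_lt_of_le h0 with rfl | hpos
  · rw [Bq_zero]; norm_num
  · rw [Bq_scale q hpos]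
    calc h ^ q * M q (x / h) ≤ 1 * 1 :=
      mul_le_mul (pow_le_one₀ h0 h1) (M_bounds q _).2 (M_bounds q _).1 (by norm_num)
    _ = 1 := by norm_num

lemma Bq_support (q : ℕ) {h : ℝ} (h0 : 0 ≤ h) (h1 : h ≤ 1) {x : ℝ}
    (hx : ((q : ℝ) + 1) / 2 < |x|) : Bq q x h = 0 := by
  rcases eq_or_lt_of_le h0 with rfl | hpos
  · rw [Bq_zero]
  · rw [Bq_scale q hpos]
    have hxh : ((q : ℝ) + 1) / 2 < |x / h| := by
      rw [abs_div, abs_of_pos hpos]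
      calc ((q : ℝ) + 1) / 2 < |x| := hx
        _ ≤ |x| / h := by
          rw [le_div_iff₀ hpos]
          exact mul_le_of_le_one_right (abs_nonneg x) h1
    rw [M_support q _ hxh, mul_zero]

lemma Bq_measurable_pair (q : ℕ) : Measurable (fun p : ℝ × ℝ => Bq q p.1 p.2) := by
  unfold Bq
  refine Measurable.const_mul ?_ _
  refine Finset.measurable_sum _ fun i _ => ?_
  exact ((pp_measurable q).comp (by fun_prop)).const_mul _

lemma Bq_measurable_fst (q : ℕ) (h : ℝ) : Measurable (fun x : ℝ => Bq q x h) :=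
  (Bq_measurable_pair q).comp (measurable_id.prodMk measurable_const)

lemma Bq_integrable (q : ℕ) {h : ℝ} (h0 : 0 ≤ h) (h1 : h ≤ 1) :
    Integrable (fun x => Bq q x h) := by
  apply Integrable.mono' (indicator_Icc_integrable (-(((q : ℝ) + 1) / 2)) (((q : ℝ) + 1) / 2))
    (Bq_measurable_fst q h).aestronglyMeasurable
  filter_upwards with x
  rcases le_or_gt (|x|) (((q : ℝ) + 1) / 2) with hc | hc
  · rw [Set.indicator_of_mem (by rw [Set.mem_Icc]; exact abs_le.1 hc)]
    rw [Real.norm_eq_abs, abs_le]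
    exact ⟨by linarith [Bq_nonneg q h0 x], Bq_le_one q h0 h1 x⟩
  · rw [Bq_support q h0 h1 hc]
    simp only [norm_zero]
    exact Set.indicator_nonneg (fun _ _ => by norm_num) x

lemma Bq_integral (q : ℕ) {h : ℝ} (h0 : 0 ≤ h) : (∫ x, Bq q x h) = h ^ (q + 1) := by
  rcases eq_or_lt_of_le h0 with rfl | hpos
  · simp only [Bq_zero, integral_zero]
    rw [zero_pow (by omega)]
  · have : (fun x => Bq q x h) = fun x => h ^ q * M q (x / h) := by
      funext x; exact Bq_scale q hpos x
    rw [this, integral_const_mul, Measure.integral_comp_div (M q) h, M_integral, smul_eq_mul,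
      abs_of_pos hpos]
    ring

set_option maxHeartbeats 1000000

/-- The `n`-fold composition of the RePU `B`-function takes values in `[0,1]`, has compact
support, and is integrable on `ℝⁿ` with integral at most `1`. -/
theorem stmt_6 (q n : ℕ) (hn : 1 ≤ n) (RePU : ℕ → ℝ → ℝ)
    (hRePU : ∀ (p : ℕ) (x : ℝ), RePU p x = if 0 ≤ x then x ^ p else 0)
    (B : ℝ → ℝ → ℝ)
    (hB : ∀ x h : ℝ, B x h = (1 / (q.factorial : ℝ)) *
      ∑ i ∈ Finset.range (q + 2), (-1 : ℝ) ^ i * ((q + 1).choose i : ℝ) *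
        RePU q (x + (((q : ℝ) + 1) / 2 - (i : ℝ)) * h))
    (𝓑 : (m : ℕ) → (Fin m → ℝ) → ℝ)
    (h1 : ∀ x : Fin 1 → ℝ, 𝓑 1 x = B (x 0) 1)
    (hstep : ∀ (m : ℕ) (x : Fin (m + 2) → ℝ),
      𝓑 (m + 2) x = B (x (Fin.last (m + 1))) (𝓑 (m + 1) (Fin.init x))) :
    (∀ x : Fin n → ℝ, 0 ≤ 𝓑 n x ∧ 𝓑 n x ≤ 1) ∧
    (∃ b : Fin n → ℝ, (∀ i, 0 < b i) ∧
      ∀ x : Fin n → ℝ, (∃ i, b i < |x i|) → 𝓑 n x = 0) ∧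
    Integrable (𝓑 n) ∧ (∫ x : Fin n → ℝ, 𝓑 n x) ≤ 1 := by
  have hBq : B = Bq q := by
    funext x h
    rw [hB]
    unfold Bq
    congr 1
    apply Finset.sum_congr rfl
    intro i _
    rw [hRePU]
    rfl
  set R : ℝ := ((q : ℝ) + 2) / 2 with hR
  have hRq : ((q : ℝ) + 1) / 2 < R := by rw [hR]; push_cast; linarith
  have key : ∀ m : ℕ,
      (∀ x : Fin (m + 1) → ℝ, 0 ≤ 𝓑 (m + 1) x ∧ 𝓑 (m + 1) x ≤ 1) ∧
      Measurable (𝓑 (m + 1)) ∧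
      (∀ x : Fin (m + 1) → ℝ, (∃ i, R < |x i|) → 𝓑 (m + 1) x = 0) ∧
      Integrable (𝓑 (m + 1)) ∧
      (∫ x : Fin (m + 1) → ℝ, 𝓑 (m + 1) x) ≤ 1 := by
    intro m
    induction m with
    | zero =>
      have hfun : 𝓑 1 = fun x : Fin 1 → ℝ => M q (x 0) := by
        funext x
        rw [h1 x, hBq, Bq_one]
      have hmp1 := volume_preserving_funUnique (Fin 1) ℝ
      have hcomp : (fun x : Fin 1 → ℝ => M q (x 0))
          = (M q) ∘ (MeasurableEquiv.funUnique (Fin 1) ℝ) := rfl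
      refine ⟨?_, ?_, ?_, ?_, ?_⟩
      · intro x; rw [hfun]; exact M_bounds q (x 0)
      · rw [hfun]; exact (M_measurable q).comp (measurable_pi_apply 0)
      · rintro x ⟨i, hi⟩
        rw [hfun]
        have hi0 : i = 0 := Fin.eq_zero i
        subst hi0
        exact M_support q (x 0) (lt_trans hRq hi)
      · rw [hfun, hcomp]
        exact (hmp1.integrable_comp_emb (MeasurableEquiv.measurableEmbedding _)).2
          (M_integrable q)
      · rw [hfun, hcomp]
        have := hmp1.integral_comp (MeasurableEquiv.measurableEmbedding _) (M q)
        calc (∫ x : Fin 1 → ℝ, ((M q) ∘ (MeasurableEquiv.funUnique (Fin 1) ℝ)) x)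
            = ∫ y : ℝ, M q y := this
          _ ≤ 1 := le_of_eq (M_integral q)
    | succ k ih =>
      obtain ⟨ih01, ihmeas, ihsupp, ihint, ihle⟩ := ih
      have hF0 : ∀ y : Fin (k + 1) → ℝ, 0 ≤ 𝓑 (k + 1) y := fun y => (ih01 y).1
      have hF1 : ∀ y : Fin (k + 1) → ℝ, 𝓑 (k + 1) y ≤ 1 := fun y => (ih01 y).2
      set e := MeasurableEquiv.piFinSuccAbove (fun _ : Fin (k + 2) => ℝ) (Fin.last (k + 1))
        with he
      have hmp := volume_preserving_piFinSuccAbove (fun _ : Fin (k + 2) => ℝ) (Fin.last (k + 1))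
      set G : ℝ × (Fin (k + 1) → ℝ) → ℝ := fun p => Bq q p.1 (𝓑 (k + 1) p.2) with hG
      have hcomp : 𝓑 (k + 2) = fun y => G (e y) := by
        funext y
        rw [hstep k y, hBq]
        show Bq q (y (Fin.last (k + 1))) (𝓑 (k + 1) (Fin.init y))
          = Bq q ((e y).1) (𝓑 (k + 1) ((e y).2))
        have h1p : (e y).1 = y (Fin.last (k + 1)) := rfl
        have h2p : ((e y).2 : Fin (k + 1) → ℝ) = Fin.init y := by
          funext j
          show y ((Fin.last (k + 1)).succAbove j) = y j.castSucc
          rw [Fin.succAbove_last]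
        rw [h1p, h2p]
      have Gmeas : Measurable G :=
        (Bq_measurable_pair q).comp (measurable_fst.prodMk (ihmeas.comp measurable_snd))
      have hG01 : ∀ p, 0 ≤ G p ∧ G p ≤ 1 := fun p =>
        ⟨Bq_nonneg q (hF0 p.2) _, Bq_le_one q (hF0 p.2) (hF1 p.2) _⟩
      have hGsupp : ∀ p : ℝ × (Fin (k + 1) → ℝ),
          (R < |p.1| ∨ ∃ i, R < |p.2 i|) → G p = 0 := by
        rintro p (hp | ⟨i, hi⟩)
        · exact Bq_support q (hF0 p.2) (hF1 p.2) (lt_trans hRq hp)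
        · show Bq q p.1 (𝓑 (k + 1) p.2) = 0
          rw [ihsupp p.2 ⟨i, hi⟩, Bq_zero]
      -- integrability of G via a product dominator
      set D : ℝ × (Fin (k + 1) → ℝ) → ℝ := fun p =>
        (Set.indicator (Set.Icc (-R) R) (fun _ => (1 : ℝ)) p.1) *
        (Set.indicator (Set.univ.pi fun _ : Fin (k + 1) => Set.Icc (-R) R)
          (fun _ => (1 : ℝ)) p.2) with hD
      have boxint : Integrable (Set.indicator
          (Set.univ.pi fun _ : Fin (k + 1) => Set.Icc (-R) R) (fun _ => (1 : ℝ))) := by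
        rw [integrable_indicator_iff (MeasurableSet.univ_pi fun _ => measurableSet_Icc)]
        refine integrableOn_const ?_
        rw [volume_pi_pi]
        exact (ENNReal.prod_lt_top (fun i _ => by
          rw [Real.volume_Icc]; exact ENNReal.ofReal_lt_top)).ne
      have Dint : Integrable D := (indicator_Icc_integrable (-R) R).mul_prod boxint
      have hGD : ∀ p, ‖G p‖ ≤ D p := by
        intro p
        by_cases hp1 : |p.1| ≤ R
        · by_cases hp2 : ∀ i, |p.2 i| ≤ R
          · rw [hD]
            simp only
            rw [Set.indicator_of_mem (by rw [Set.mem_Icc]; exact abs_le.1 hp1),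
              Set.indicator_of_mem (by
                rw [Set.mem_univ_pi]
                intro i
                rw [Set.mem_Icc]
                exact abs_le.1 (hp2 i))]
            rw [Real.norm_eq_abs, abs_le]
            exact ⟨by linarith [(hG01 p).1], by linarith [(hG01 p).2]⟩
          · push_neg at hp2
            obtain ⟨i, hi⟩ := hp2
            rw [hGsupp p (Or.inr ⟨i, hi⟩)]
            simp only [norm_zero, hD]
            exact mul_nonneg (Set.indicator_nonneg (fun _ _ => by norm_num) _)
              (Set.indicator_nonneg (fun _ _ => by norm_num) _)
        · rw [hGsupp p (Or.inl (not_le.1 hp1))]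
          simp only [norm_zero, hD]
          exact mul_nonneg (Set.indicator_nonneg (fun _ _ => by norm_num) _)
            (Set.indicator_nonneg (fun _ _ => by norm_num) _)
      have Gint : Integrable G :=
        Integrable.mono' Dint Gmeas.aestronglyMeasurable (Filter.Eventually.of_forall hGD)
      have int1 : Integrable (fun y : Fin (k + 1) → ℝ => (𝓑 (k + 1) y) ^ (q + 1)) := by
        apply Integrable.mono' ihint (ihmeas.pow_const (q + 1)).aestronglyMeasurable
        filter_upwards with y
        rw [Real.norm_eq_abs, abs_of_nonneg (pow_nonneg (hF0 y) _)]
        calc (𝓑 (k + 1) y) ^ (q + 1) ≤ (𝓑 (k + 1) y) ^ 1 :=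
            pow_le_pow_of_le_one (hF0 y) (hF1 y) (by omega)
          _ = 𝓑 (k + 1) y := pow_one _
      have hGle : (∫ p, G p) ≤ 1 := by
        have hswap : (∫ p, G p) = ∫ y, ∫ t, G (t, y) := integral_prod_symm G Gint
        rw [hswap]
        have hinner : ∀ y : Fin (k + 1) → ℝ, (∫ t, G (t, y)) = (𝓑 (k + 1) y) ^ (q + 1) :=
          fun y => Bq_integral q (hF0 y)
        rw [integral_congr_ae (Filter.Eventually.of_forall hinner)]
        calc (∫ y, (𝓑 (k + 1) y) ^ (q + 1)) ≤ ∫ y, 𝓑 (k + 1) y := by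
              apply integral_mono int1 ihint
              intro y
              calc (𝓑 (k + 1) y) ^ (q + 1) ≤ (𝓑 (k + 1) y) ^ 1 :=
                  pow_le_pow_of_le_one (hF0 y) (hF1 y) (by omega)
                _ = 𝓑 (k + 1) y := pow_one _
          _ ≤ 1 := ihle
      refine ⟨?_, ?_, ?_, ?_, ?_⟩
      · intro x; rw [hcomp]; exact hG01 (e x)
      · rw [hcomp]; exact Gmeas.comp e.measurable
      · rintro x ⟨i, hi⟩
        rw [hcomp]
        apply hGsupp
        by_cases hil : i = Fin.last (k + 1)
        · left
          subst hil
          exact hi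
        · right
          refine ⟨i.castPred hil, ?_⟩
          show R < |x ((Fin.last (k + 1)).succAbove (i.castPred hil))|
          rw [Fin.succAbove_last, Fin.castSucc_castPred]
          exact hi
      · rw [hcomp]
        exact (hmp.integrable_comp_emb e.measurableEmbedding).2 Gint
      · rw [hcomp]
        calc (∫ x : Fin (k + 2) → ℝ, G (e x)) = ∫ p, G p :=
            hmp.integral_comp e.measurableEmbedding G
          _ ≤ 1 := hGle
  obtain ⟨m, rfl⟩ : ∃ m, n = m + 1 := ⟨n - 1, by omega⟩
  obtain ⟨h01, _, hsupp, hint, hle⟩ := key m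
  exact ⟨h01, ⟨fun _ => R, fun _ => by rw [hR]; positivity, fun x hx => hsupp x hx⟩, hint, hle⟩
end

section
/- Let σ_p(x) := log(1 + e^x) be the softplus function and, for h ∈ ℝ, define the second central difference B_p(x,h) := σ_p(x + h) − 2 σ_p(x) + σ_p(x − h). Then: (i) B_p(x,h) ≥ 0 for all x ∈ ℝ; (ii) B_p(·,h) is an even function of x; (iii) B_p(x,h) → 0 as |x| → ∞; and (iv) B_p(·,h) ∈ L¹(ℝ) with ∫_ℝ B_p(x,h) dx = h². -/
open MeasureTheory Filter

noncomputable def sp (x : ℝ) : ℝ := Real.log (1 + Real.exp x)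

lemma sp_cont : Continuous sp := by
  apply Continuous.log (continuous_const.add Real.continuous_exp)
  intro x; exact (by positivity : (0:ℝ) < 1 + Real.exp x).ne'

lemma sp_neg (y : ℝ) : sp (-y) = sp y - y := by
  unfold sp
  have h1 : (1 : ℝ) + Real.exp (-y) = Real.exp (-y) * (1 + Real.exp y) := by
    rw [mul_add, mul_one, ← Real.exp_add]
    simp [add_comm]
  rw [h1, Real.log_mul (by positivity) (by positivity), Real.log_exp]
  ring

lemma sp_atBot : Tendsto sp atBot (nhds 0) := by
  have h1 : Tendsto (fun x : ℝ => 1 + Real.exp x) atBot (nhds 1) := by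
    simpa using tendsto_const_nhds.add Real.tendsto_exp_atBot
  have h2 : ContinuousAt Real.log 1 := Real.continuousAt_log (by norm_num)
  have h3 := h2.tendsto.comp h1
  rw [Real.log_one] at h3; exact h3

lemma sp_mono : Monotone sp := by
  intro a b hab
  exact Real.log_le_log (by positivity) (by simp [Real.exp_le_exp.2 hab])

lemma sp_lip (a b : ℝ) (hab : a ≤ b) : sp b - sp a ≤ b - a := by
  have h1 : (1 : ℝ) + Real.exp b ≤ Real.exp (b - a) * (1 + Real.exp a) := by
    have h2 : (1:ℝ) ≤ Real.exp (b - a) := Real.one_le_exp (by linarith)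
    have h3 : Real.exp (b - a) * Real.exp a = Real.exp b := by
      rw [← Real.exp_add]; ring_nf
    nlinarith [Real.exp_pos a]
  have := Real.log_le_log (by positivity : (0:ℝ) < 1 + Real.exp b) h1
  rw [Real.log_mul (by positivity) (by positivity), Real.log_exp] at this
  unfold sp; linarith

lemma key (h : ℝ) (hh : 0 ≤ h) (B : ℝ → ℝ)
    (hB : ∀ x : ℝ, B x = Real.log (1 + Real.exp (x + h))
      - 2 * Real.log (1 + Real.exp x) + Real.log (1 + Real.exp (x - h))) :
    (∀ x : ℝ, 0 ≤ B x) ∧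
    (∀ x : ℝ, B (-x) = B x) ∧
    Tendsto B atTop (nhds 0) ∧ Tendsto B atBot (nhds 0) ∧
    Integrable B ∧ (∫ x : ℝ, B x) = h ^ 2 := by
  have hBsp : ∀ x : ℝ, B x = sp (x + h) - 2 * sp x + sp (x - h) := hB
  -- nonnegativity
  have hnn : ∀ x : ℝ, 0 ≤ B x := by
    intro x
    rw [hBsp]
    have hprod : (1 + Real.exp x) ^ 2 ≤ (1 + Real.exp (x + h)) * (1 + Real.exp (x - h)) := by
      have e1 : Real.exp (x + h) * Real.exp (x - h) = Real.exp x * Real.exp x := by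
        rw [← Real.exp_add, ← Real.exp_add]; ring_nf
      have e2 : 2 * Real.exp x ≤ Real.exp (x + h) + Real.exp (x - h) := by
        nlinarith [sq_nonneg (Real.exp (x+h) - Real.exp (x-h)), Real.exp_pos (x+h),
          Real.exp_pos (x-h), Real.exp_pos x, sq_nonneg (Real.exp (x+h) + Real.exp (x-h))]
      nlinarith
    have hlog := Real.log_le_log (by positivity : (0:ℝ) < (1 + Real.exp x)^2) hprod
    rw [Real.log_pow, Real.log_mul (by positivity) (by positivity)] at hlog
    unfold sp
    push_cast at hlog
    linarith
  -- evenness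
  have heven : ∀ x : ℝ, B (-x) = B x := by
    intro x
    rw [hBsp, hBsp]
    have e1 : -x + h = -(x - h) := by ring
    have e2 : -x - h = -(x + h) := by ring
    rw [e1, e2, sp_neg, sp_neg, sp_neg]
    ring
  -- atBot
  have hbot : Tendsto B atBot (nhds 0) := by
    have t1 : Tendsto (fun x : ℝ => sp (x + h)) atBot (nhds 0) :=
      sp_atBot.comp (tendsto_atBot_add_const_right _ h tendsto_id)
    have t2 : Tendsto (fun x : ℝ => sp x) atBot (nhds 0) := sp_atBot
    have t3 : Tendsto (fun x : ℝ => sp (x - h)) atBot (nhds 0) :=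
      sp_atBot.comp (tendsto_atBot_add_const_right _ (-h) tendsto_id)
    have t4 := (t1.sub (t2.const_mul 2)).add t3
    simp only [mul_zero, sub_zero, add_zero, zero_sub, neg_zero] at t4
    exact t4.congr fun x => (hBsp x).symm
  -- atTop
  have htop : Tendsto B atTop (nhds 0) := by
    have t : Tendsto (fun x : ℝ => B (-x)) atTop (nhds 0) :=
      hbot.comp tendsto_neg_atTop_atBot
    exact t.congr fun x => heven x
  -- continuity
  have hBc : Continuous B := by
    have t : Continuous fun x : ℝ => sp (x + h) - 2 * sp x + sp (x - h) := by
      exact ((sp_cont.comp (continuous_id.add continuous_const)).sub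
        (continuous_const.mul sp_cont)).add (sp_cont.comp (continuous_id.sub continuous_const))
    exact t.congr fun x => (hBsp x).symm
  -- the g function
  set g : ℝ → ℝ := fun y => sp y - sp (y - h) with hg
  have hgc : Continuous g := sp_cont.sub (sp_cont.comp (continuous_id.sub continuous_const))
  have hg0 : ∀ y, 0 ≤ g y := fun y => by
    simp only [hg, sub_nonneg]; exact sp_mono (by linarith)
  have hgh : ∀ y, g y ≤ h := fun y => by
    have := sp_lip (y - h) y (by linarith)
    simp only [hg]; linarith
  have hgtop : Tendsto g atTop (nhds h) := by
    have e : ∀ y : ℝ, g y = h + sp (-y) - sp (-(y - h)) := by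
      intro y
      have e1 := sp_neg y
      have e2 := sp_neg (y - h)
      simp only [hg]; linarith
    have t1 : Tendsto (fun y : ℝ => sp (-y)) atTop (nhds 0) :=
      sp_atBot.comp tendsto_neg_atTop_atBot
    have t2 : Tendsto (fun y : ℝ => sp (-(y - h))) atTop (nhds 0) :=
      sp_atBot.comp (tendsto_neg_atTop_atBot.comp
        (tendsto_atTop_add_const_right _ (-h) tendsto_id))
    have t3 : Tendsto (fun y : ℝ => h + sp (-y) - sp (-(y - h))) atTop (nhds (h + 0 - 0)) :=
      (Tendsto.add tendsto_const_nhds t1).sub t2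
    simp only [add_zero, sub_zero] at t3
    exact t3.congr fun y => (e y).symm
  have hgbot : Tendsto g atBot (nhds 0) := by
    have t1 : Tendsto (fun y : ℝ => sp (y - h)) atBot (nhds 0) :=
      sp_atBot.comp (tendsto_atBot_add_const_right _ (-h) tendsto_id)
    have t2 := sp_atBot.sub t1
    simpa using t2
  have hBg : ∀ x : ℝ, B x = g (x + h) - g x := by
    intro x
    rw [hBsp x]
    simp only [hg]
    rw [show x + h - h = x by ring]
    ring
  have igA : ∀ a b : ℝ, IntervalIntegrable g volume a b := fun a b =>
    hgc.intervalIntegrable a b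
  have hgch : Continuous fun x : ℝ => g (x + h) :=
    hgc.comp (continuous_id.add continuous_const)
  -- antiderivative of g
  set G : ℝ → ℝ := fun y => ∫ t in (0:ℝ)..y, g t with hGdef
  have hG : ∀ a b : ℝ, (∫ x in a..b, g x) = G b - G a := by
    intro a b
    have h1 := intervalIntegral.integral_add_adjacent_intervals (igA 0 a) (igA a b)
    simp only [hGdef]
    linarith
  -- interval integral identity
  have hII : ∀ R : ℝ, (∫ x in (-R)..R, B x)
      = ∫ t in (0:ℝ)..h, (g (t + R) - g (t + -R)) := by
    intro R
    have e1 : (∫ x in (-R)..R, B x)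
        = (∫ x in (-R)..R, g (x + h)) - ∫ x in (-R)..R, g x := by
      rw [← intervalIntegral.integral_sub (hgch.intervalIntegrable _ _) (igA _ _)]
      exact intervalIntegral.integral_congr fun x _ => hBg x
    have e2 : (∫ x in (-R)..R, g (x + h)) = ∫ x in (-R + h)..(R + h), g x :=
      intervalIntegral.integral_comp_add_right g h
    have e3 : (∫ t in (0:ℝ)..h, (g (t + R) - g (t + -R)))
        = (∫ t in (0:ℝ)..h, g (t + R)) - ∫ t in (0:ℝ)..h, g (t + -R) :=
      intervalIntegral.integral_sub
        ((hgc.comp (continuous_id.add continuous_const)).intervalIntegrable _ _)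
        ((hgc.comp (continuous_id.add continuous_const)).intervalIntegrable _ _)
    have e4 : (∫ t in (0:ℝ)..h, g (t + R)) = ∫ t in (0 + R)..(h + R), g t :=
      intervalIntegral.integral_comp_add_right g R
    have e5 : (∫ t in (0:ℝ)..h, g (t + -R)) = ∫ t in (0 + -R)..(h + -R), g t :=
      intervalIntegral.integral_comp_add_right g (-R)
    rw [e1, e2, e3, e4, e5, hG, hG, hG, hG,
      show -R + h = h + -R by ring, show R + h = h + R by ring, zero_add, zero_add]
    ring
  -- limit of interval integrals
  have hlim : Tendsto (fun R : ℝ => ∫ x in (-R)..R, B x) atTop (nhds (h ^ 2)) := by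
    have hval : (∫ t in (0:ℝ)..h, (h:ℝ)) = h ^ 2 := by
      simp [intervalIntegral.integral_const]
      ring
    have hdc : Tendsto (fun R : ℝ => ∫ t in (0:ℝ)..h, (g (t + R) - g (t + -R)))
        atTop (nhds (∫ t in (0:ℝ)..h, (h:ℝ))) := by
      apply intervalIntegral.tendsto_integral_filter_of_dominated_convergence
        (bound := fun _ => 2 * h)
      · filter_upwards with R
        exact ((hgc.comp (continuous_id.add continuous_const)).sub
          (hgc.comp (continuous_id.add continuous_const))).aestronglyMeasurable
      · filter_upwards with R
        filter_upwards with t _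
        rw [Real.norm_eq_abs, abs_le]
        have a1 := hgh (t + R); have a2 := hg0 (t + -R)
        have a3 := hg0 (t + R); have a4 := hgh (t + -R)
        constructor <;> linarith
      · exact intervalIntegrable_const
      · filter_upwards with t _
        have t1 : Tendsto (fun R : ℝ => g (t + R)) atTop (nhds h) :=
          hgtop.comp (tendsto_atTop_add_const_left _ t tendsto_id)
        have t2 : Tendsto (fun R : ℝ => g (t + -R)) atTop (nhds 0) :=
          hgbot.comp (tendsto_atBot_add_const_left _ t tendsto_neg_atTop_atBot)
        simpa using t1.sub t2
    rw [hval] at hdc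
    exact hdc.congr fun R => (hII R).symm
  have hint : Integrable B := by
    apply integrable_of_intervalIntegral_norm_tendsto (μ := volume)
      (a := fun R : ℝ => -R) (b := fun R : ℝ => R) (l := atTop) (h ^ 2)
      (fun R : ℝ => hBc.integrableOn_Ioc) tendsto_neg_atTop_atBot tendsto_id
    apply hlim.congr
    intro R
    apply intervalIntegral.integral_congr
    intro x _
    exact (Real.norm_of_nonneg (hnn x)).symm
  refine ⟨hnn, heven, htop, hbot, hint, ?_⟩
  have h2 := intervalIntegral_tendsto_integral (μ := volume)
    (a := fun R : ℝ => -R) (b := fun R : ℝ => R) (l := atTop)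
    hint tendsto_neg_atTop_atBot tendsto_id
  exact tendsto_nhds_unique h2 hlim

/-- Properties of the softplus `B`-function, the second central difference of
`σ_p(x) = log(1 + eˣ)`: nonnegativity, evenness, vanishing at infinity, integrability,
and total integral `h²`. -/
theorem stmt_8 (h : ℝ) (B : ℝ → ℝ)
    (hB : ∀ x : ℝ, B x = Real.log (1 + Real.exp (x + h))
      - 2 * Real.log (1 + Real.exp x) + Real.log (1 + Real.exp (x - h))) :
    (∀ x : ℝ, 0 ≤ B x) ∧
    (∀ x : ℝ, B (-x) = B x) ∧
    Tendsto B atTop (nhds 0) ∧ Tendsto B atBot (nhds 0) ∧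
    Integrable B ∧ (∫ x : ℝ, B x) = h ^ 2 := by
  rcases le_total 0 h with hh | hh
  · exact key h hh B hB
  · have hB' : ∀ x : ℝ, B x = Real.log (1 + Real.exp (x + -h))
        - 2 * Real.log (1 + Real.exp x) + Real.log (1 + Real.exp (x - -h)) := by
      intro x
      rw [hB x, show x + -h = x - h by ring, show x - -h = x + h by ring]
      ring
    have hk := key (-h) (by linarith) B hB'
    simpa [neg_sq] using hk
end

section
/- Let σ : ℝ → ℝ be a measurable generalized sigmoidal function with limits L at +∞ and ℓ at −∞, L ≠ ℓ, tail exponent α > 0, and tail points x⁻ < 0 < x⁺, and for h ∈ ℝ define B(x,h) := (1/(2(L − ℓ))) (σ(x + h) − σ(x − h)). Then: (i) B(·,h) ∈ L¹(ℝ) with ∫_ℝ B(x,h) dx = h; and (ii) for every h ≠ 0 and every compact interval [m, M], the series Σ_{k=−N}^{N} B(x + kh, h) converges uniformly for x ∈ [m, M] as N → ∞ to sign(h). -/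
open MeasureTheory Filter

/-- Auxiliary uniform convergence lemma: for `h > 0`, the four-term expression
converges uniformly on `[m, M]` to `c * (2 * (L - ℓ))`. -/
lemma aux_unif (σ : ℝ → ℝ) (L ℓ c : ℝ)
    (hL : Tendsto σ atTop (nhds L)) (hl : Tendsto σ atBot (nhds ℓ))
    (h m M : ℝ) (hh : 0 < h) :
    TendstoUniformlyOn
      (fun (N : ℕ) (x : ℝ) =>
        c * (σ (x + N * h) + σ (x + (N + 1) * h) - σ (x - (N + 1) * h) - σ (x - N * h)))
      (fun _ => c * (2 * (L - ℓ))) atTop (Set.Icc m M) := by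
  rw [Metric.tendstoUniformlyOn_iff]
  intro ε hε
  set ε' := ε / (4 * (|c| + 1)) with hε'def
  have hε' : 0 < ε' := by positivity
  have h1 : ∀ᶠ y in atTop, |σ y - L| < ε' := by
    have := hL.eventually (Metric.ball_mem_nhds L hε')
    simpa [Real.dist_eq] using this
  have h2 : ∀ᶠ y in atBot, |σ y - ℓ| < ε' := by
    have := hl.eventually (Metric.ball_mem_nhds ℓ hε')
    simpa [Real.dist_eq] using this
  obtain ⟨R, hR⟩ := eventually_atTop.1 h1
  obtain ⟨r, hr⟩ := eventually_atBot.1 h2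
  obtain ⟨N₀, hN₀⟩ := exists_nat_ge (max ((R - m) / h) ((M - r) / h))
  filter_upwards [eventually_ge_atTop N₀] with N hN x hx
  have hNc : (N₀ : ℝ) ≤ N := Nat.cast_le.2 hN
  have hR' : (R - m) / h ≤ (N : ℝ) := le_trans (le_trans (le_max_left _ _) hN₀) hNc
  have hr' : (M - r) / h ≤ (N : ℝ) := le_trans (le_trans (le_max_right _ _) hN₀) hNc
  have hRm : R - m ≤ (N : ℝ) * h := by
    rw [div_le_iff₀ hh] at hR'; linarith
  have hMr : M - r ≤ (N : ℝ) * h := by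
    rw [div_le_iff₀ hh] at hr'; linarith
  have kA : R ≤ x + (N : ℝ) * h := by have := hx.1; linarith
  have kB : R ≤ x + ((N : ℝ) + 1) * h := by have := hx.1; nlinarith
  have kC : x - ((N : ℝ) + 1) * h ≤ r := by have := hx.2; nlinarith
  have kD : x - (N : ℝ) * h ≤ r := by have := hx.2; linarith
  have eA := hR _ kA
  have eB := hR _ kB
  have eC := hr _ kC
  have eD := hr _ kD
  rw [Real.dist_eq]
  have key : c * (2 * (L - ℓ)) -
      c * (σ (x + N * h) + σ (x + (N + 1) * h) - σ (x - (N + 1) * h) - σ (x - N * h)) =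
      -c * ((σ (x + N * h) - L) + (σ (x + (N + 1) * h) - L) -
        (σ (x - (N + 1) * h) - ℓ) - (σ (x - N * h) - ℓ)) := by ring
  rw [key, abs_mul, abs_neg]
  set A := σ (x + N * h) - L
  set A' := σ (x + (N + 1) * h) - L
  set C' := σ (x - (N + 1) * h) - ℓ
  set D' := σ (x - N * h) - ℓ
  have tri : |A + A' - C' - D'| ≤ |A| + |A'| + |C'| + |D'| := by
    have e : A + A' - C' - D' = ((A + A') + -C') + -D' := by ring
    have t1 : |((A + A') + -C') + -D'| ≤ |(A + A') + -C'| + |-D'| := abs_add_le _ _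
    have t2 : |(A + A') + -C'| ≤ |A + A'| + |-C'| := abs_add_le _ _
    have t3 : |A + A'| ≤ |A| + |A'| := abs_add_le _ _
    rw [abs_neg] at t1 t2
    rw [e]
    linarith
  have tri2 : |A + A' - C' - D'| < 4 * ε' := by
    have := eA; have := eB; have := eC; have := eD
    linarith
  have hfin : |c| * (4 * ε') < ε := by
    have hcc : 0 ≤ |c| := abs_nonneg c
    have h4 : |c| * (4 * ε') = (|c| / (|c| + 1)) * ε := by
      rw [hε'def]
      field_simp
    have hlt : |c| / (|c| + 1) < 1 := by
      rw [div_lt_one (by linarith)]; linarith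
    rw [h4]
    nlinarith
  calc |c| * |A + A' - C' - D'| ≤ |c| * (4 * ε') := by
        gcongr
    _ < ε := hfin

/-- For a measurable generalized sigmoidal function, the `B`-function is integrable with
integral `h`, and the symmetric partial sums `Σ_{k=-N}^{N} B(x + kh, h)` converge uniformly
on compact intervals to `sign h`. -/
theorem stmt_10 (σ : ℝ → ℝ) (hmeas : Measurable σ) (L ℓ α xm xp : ℝ)
    (hbdd : ∃ M : ℝ, ∀ x : ℝ, |σ x| ≤ M)
    (hL : Tendsto σ atTop (nhds L)) (hl : Tendsto σ atBot (nhds ℓ)) (hLl : L ≠ ℓ)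
    (hα : 0 < α) (hxm : xm < 0) (hxp : 0 < xp)
    (htailm : ∃ C : ℝ, ∀ x : ℝ, x < xm → |σ x - ℓ| ≤ C * |x| ^ (-(1 + α)))
    (htailp : ∃ C : ℝ, ∀ x : ℝ, xp < x → |L - σ x| ≤ C * |x| ^ (-(1 + α)))
    (B : ℝ → ℝ → ℝ)
    (hB : ∀ x h : ℝ, B x h = (1 / (2 * (L - ℓ))) * (σ (x + h) - σ (x - h))) :
    (∀ h : ℝ, Integrable (fun x => B x h) ∧ (∫ x : ℝ, B x h) = h) ∧
    (∀ h : ℝ, h ≠ 0 → ∀ m M : ℝ,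
      TendstoUniformlyOn
        (fun (N : ℕ) (x : ℝ) => ∑ k ∈ Finset.Icc (-(N : ℤ)) (N : ℤ), B (x + (k : ℝ) * h) h)
        (fun _ => Real.sign h) atTop (Set.Icc m M)) := by
  have hsub : L - ℓ ≠ 0 := sub_ne_zero.2 hLl
  have hc2 : (2 : ℝ) * (L - ℓ) ≠ 0 := by positivity
  set c : ℝ := 1 / (2 * (L - ℓ)) with hcdef
  -- the step function and the integrable remainder
  set s : ℝ → ℝ := fun x => if 0 ≤ x then L else ℓ with hsdef
  set τ : ℝ → ℝ := fun x => σ x - s x with hτdef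
  have hsmeas : Measurable s := Measurable.ite measurableSet_Ici measurable_const measurable_const
  have hτmeas : Measurable τ := hmeas.sub hsmeas
  obtain ⟨Mb, hMb⟩ := hbdd
  obtain ⟨Cm, hCm⟩ := htailm
  obtain ⟨Cp, hCp⟩ := htailp
  -- integrability of τ on the three pieces
  have hIoi : IntegrableOn τ (Set.Ioi xp) := by
    have base : IntegrableOn (fun x : ℝ => Cp * x ^ (-(1 + α))) (Set.Ioi xp) :=
      (integrableOn_Ioi_rpow_of_lt (by linarith) hxp).const_mul Cp
    refine Integrable.mono base (hτmeas.aestronglyMeasurable.restrict) ?_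
    filter_upwards [ae_restrict_mem measurableSet_Ioi] with x hx
    have hx0 : 0 < x := hxp.trans hx
    have hτx : τ x = σ x - L := by simp [hτdef, hsdef, hx0.le]
    simp only [Real.norm_eq_abs]
    rw [hτx, abs_sub_comm]
    calc |L - σ x| ≤ Cp * |x| ^ (-(1 + α)) := hCp x hx
      _ = Cp * x ^ (-(1 + α)) := by rw [abs_of_pos hx0]
      _ ≤ |Cp * x ^ (-(1 + α))| := le_abs_self _
  have hIio : IntegrableOn τ (Set.Iio xm) := by
    rw [← (Measure.measurePreserving_neg (volume : Measure ℝ)).integrableOn_comp_preimage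
        (Homeomorph.neg ℝ).measurableEmbedding]
    simp only [Function.comp_def, Set.neg_preimage, Set.neg_Iio]
    have base : IntegrableOn (fun x : ℝ => Cm * x ^ (-(1 + α))) (Set.Ioi (-xm)) :=
      (integrableOn_Ioi_rpow_of_lt (by linarith) (by linarith)).const_mul Cm
    refine Integrable.mono base ((hτmeas.comp measurable_neg).aestronglyMeasurable.restrict) ?_
    filter_upwards [ae_restrict_mem measurableSet_Ioi] with x hx
    have hx0 : 0 < x := lt_trans (by linarith) hx
    have hnx : -x < xm := by simpa using neg_lt_neg (Set.mem_Ioi.1 hx)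
    have hτx : τ (-x) = σ (-x) - ℓ := by
      have : ¬ (0 ≤ -x) := by linarith
      simp [hτdef, hsdef, this]
    simp only [Real.norm_eq_abs]
    rw [hτx]
    calc |σ (-x) - ℓ| ≤ Cm * |(-x)| ^ (-(1 + α)) := hCm _ hnx
      _ = Cm * x ^ (-(1 + α)) := by rw [abs_neg, abs_of_pos hx0]
      _ ≤ |Cm * x ^ (-(1 + α))| := le_abs_self _
  have hIcc : IntegrableOn τ (Set.Icc xm xp) := by
    apply Measure.integrableOn_of_bounded (M := Mb + max |L| |ℓ|)
    · rw [Real.volume_Icc]; exact ENNReal.ofReal_ne_top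
    · exact hτmeas.aestronglyMeasurable
    · refine ae_of_all _ fun x => ?_
      simp only [Real.norm_eq_abs, hτdef]
      have h1 : |σ x - s x| ≤ |σ x| + |s x| := abs_sub _ _
      have h2 : |s x| ≤ max |L| |ℓ| := by
        simp only [hsdef]
        split_ifs
        · exact le_max_left _ _
        · exact le_max_right _ _
      have := hMb x
      linarith
  have hτ : Integrable τ := by
    rw [← integrableOn_univ]
    have huniv : (Set.univ : Set ℝ) = Set.Iio xm ∪ (Set.Icc xm xp ∪ Set.Ioi xp) := by
      ext x
      simp only [Set.mem_univ, Set.mem_union, Set.mem_Iio, Set.mem_Icc, Set.mem_Ioi, true_iff]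
      rcases lt_or_ge x xm with hx | hx
      · exact Or.inl hx
      · rcases le_or_gt x xp with hx2 | hx2
        · exact Or.inr (Or.inl ⟨hx, hx2⟩)
        · exact Or.inr (Or.inr hx2)
    rw [huniv]
    exact hIio.union (hIcc.union hIoi)
  -- the jump part
  have hD : ∀ h : ℝ, Integrable (fun x => s (x + h) - s (x - h)) ∧
      (∫ x : ℝ, (s (x + h) - s (x - h))) = 2 * h * (L - ℓ) := by
    intro h
    rcases lt_trichotomy h 0 with hneg | h0 | hpos
    · have hfun : (fun x => s (x + h) - s (x - h)) =
          Set.indicator (Set.Ico h (-h)) (fun _ => ℓ - L) := by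
        funext x
        rw [Set.indicator_apply]
        rcases lt_or_ge x h with hx | hx
        · rw [if_neg (by simp only [Set.mem_Ico]; intro hmem; linarith [hmem.1])]
          simp only [hsdef]
          rw [if_neg (by linarith), if_neg (by linarith)]
          ring
        · rcases lt_or_ge x (-h) with hx2 | hx2
          · rw [if_pos ⟨hx, hx2⟩]
            simp only [hsdef]
            rw [if_neg (by linarith), if_pos (by linarith)]
          · rw [if_neg (by simp only [Set.mem_Ico]; intro hmem; linarith [hmem.2])]
            simp only [hsdef]
            rw [if_pos (by linarith), if_pos (by linarith)]
            ring
      rw [hfun]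
      constructor
      · rw [integrable_indicator_iff measurableSet_Ico]
        exact integrableOn_const (by rw [Real.volume_Ico]; exact ENNReal.ofReal_ne_top)
      · rw [integral_indicator_const _ measurableSet_Ico, Real.volume_real_Ico_of_le (by linarith),
          smul_eq_mul]
        ring
    · subst h0
      constructor
      · simpa using (integrable_zero ℝ ℝ (volume : Measure ℝ))
      · simp
    · have hfun : (fun x => s (x + h) - s (x - h)) =
          Set.indicator (Set.Ico (-h) h) (fun _ => L - ℓ) := by
        funext x
        rw [Set.indicator_apply]
        rcases lt_or_ge x (-h) with hx | hx
        · rw [if_neg (by simp only [Set.mem_Ico]; intro hmem; linarith [hmem.1])]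
          simp only [hsdef]
          rw [if_neg (by linarith), if_neg (by linarith)]
          ring
        · rcases lt_or_ge x h with hx2 | hx2
          · rw [if_pos ⟨hx, hx2⟩]
            simp only [hsdef]
            rw [if_pos (by linarith), if_neg (by linarith)]
          · rw [if_neg (by simp only [Set.mem_Ico]; intro hmem; linarith [hmem.2])]
            simp only [hsdef]
            rw [if_pos (by linarith), if_pos (by linarith)]
            ring
      rw [hfun]
      constructor
      · rw [integrable_indicator_iff measurableSet_Ico]
        exact integrableOn_const (by rw [Real.volume_Ico]; exact ENNReal.ofReal_ne_top)
      · rw [integral_indicator_const _ measurableSet_Ico, Real.volume_real_Ico_of_le (by linarith),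
          smul_eq_mul]
        ring
  constructor
  · -- integrability and integral value
    intro h
    have hfun : (fun x => B x h) =
        fun x => c * ((τ (x + h) - τ (x - h)) + (s (x + h) - s (x - h))) := by
      funext x
      rw [hB]
      simp only [hτdef, hcdef]
      ring
    have hint1 : Integrable (fun x : ℝ => τ (x + h)) := hτ.comp_add_right h
    have hint2 : Integrable (fun x : ℝ => τ (x - h)) := hτ.comp_sub_right h
    have hintD := (hD h).1
    have hsubint : Integrable (fun x : ℝ => τ (x + h) - τ (x - h)) := hint1.sub hint2
    constructor
    · rw [hfun]
      exact (((hint1.sub hint2).add hintD).const_mul c)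
    · rw [hfun]
      rw [MeasureTheory.integral_const_mul, integral_add hsubint hintD,
        integral_sub hint1 hint2, integral_add_right_eq_self τ h,
        integral_sub_right_eq_self τ h, sub_self, zero_add, (hD h).2, hcdef]
      field_simp
  · -- uniform convergence
    intro h hh m M
    -- closed form of partial sums
    have sumform : ∀ (N : ℕ) (x : ℝ),
        ∑ k ∈ Finset.Icc (-(N : ℤ)) (N : ℤ), B (x + (k : ℝ) * h) h
        = c * (σ (x + N * h) + σ (x + (N + 1) * h) - σ (x - (N + 1) * h) - σ (x - N * h)) := by
      intro N x
      induction N with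
      | zero =>
        simp only [Nat.cast_zero, neg_zero, Finset.Icc_self, Finset.sum_singleton,
          Int.cast_zero, zero_mul, add_zero, hB, hcdef]
        push_cast
        ring_nf
      | succ n ih =>
        have hset : Finset.Icc (-((n : ℤ) + 1)) ((n : ℤ) + 1) =
            insert (-((n : ℤ) + 1)) (insert ((n : ℤ) + 1) (Finset.Icc (-(n : ℤ)) (n : ℤ))) := by
          ext k
          simp only [Finset.mem_Icc, Finset.mem_insert]
          omega
        have hcast : ((n + 1 : ℕ) : ℤ) = (n : ℤ) + 1 := by push_cast; ring
        rw [hcast, hset, Finset.sum_insert (by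
            simp only [Finset.mem_insert, Finset.mem_Icc]
            omega),
          Finset.sum_insert (by simp only [Finset.mem_Icc]; omega), ih, hB, hB, hcdef]
        push_cast
        ring_nf
    rcases hh.lt_or_gt with hneg | hpos
    · -- h < 0
      have hsign : Real.sign h = -1 := Real.sign_of_neg hneg
      have hval : Real.sign h = (-c) * (2 * (L - ℓ)) := by
        rw [hsign, hcdef]; field_simp
      have base := aux_unif σ L ℓ (-c) hL hl (-h) m M (by linarith)
      rw [show (fun _ : ℝ => Real.sign h) = (fun _ : ℝ => (-c) * (2 * (L - ℓ))) from
        funext fun _ => hval]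
      refine base.congr ?_
      filter_upwards with N
      intro x _
      dsimp only
      rw [sumform N x]
      ring_nf
    · -- h > 0
      have hsign : Real.sign h = 1 := Real.sign_of_pos hpos
      have hval : Real.sign h = c * (2 * (L - ℓ)) := by
        rw [hsign, hcdef]; field_simp
      have base := aux_unif σ L ℓ c hL hl h m M hpos
      rw [show (fun _ : ℝ => Real.sign h) = (fun _ : ℝ => c * (2 * (L - ℓ))) from
        funext fun _ => hval]
      refine base.congr ?_
      filter_upwards with N
      intro x _
      dsimp only
      rw [sumform N x]
end

section
/- Let σ : ℝ → ℝ be a nondecreasing generalized sigmoidal function with limits L at +∞ and ℓ at −∞, L ≠ ℓ, tail exponent α > 0 and tail points x⁻ < 0 < x⁺, and define B(x,h) := (1/(2(L − ℓ)))(σ(x + h) − σ(x − h)). Let 𝔅 : ℝⁿ → ℝ be the n-fold composition 𝔅(x₁) := B(x₁,1), 𝔅(x₁,…,x_n) := B(x_n, 𝔅(x₁,…,x_{n−1})). Then 𝔅 ∈ L¹(ℝⁿ) and ∫_{ℝⁿ} 𝔅(x) dx = 1. -/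
open MeasureTheory Filter
open intervalIntegral

lemma sig_key {σ : ℝ → ℝ} {L ℓ : ℝ} (hmono : Monotone σ)
    (hL : Tendsto σ atTop (nhds L)) (hl : Tendsto σ atBot (nhds ℓ))
    (h : ℝ) (hh : 0 ≤ h) :
    Integrable (fun t => σ (t + h) - σ (t - h)) ∧
      (∫ t, (σ (t + h) - σ (t - h))) = 2 * h * (L - ℓ) := by
  have hm1 : Monotone fun t : ℝ => σ (t + h) :=
    fun a b hab => hmono (by linarith)
  have hm2 : Monotone fun t : ℝ => σ (t - h) :=
    fun a b hab => hmono (by linarith)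
  have gnn : ∀ t : ℝ, 0 ≤ σ (t + h) - σ (t - h) := fun t =>
    sub_nonneg.2 (hmono (by linarith))
  have hii : ∀ a b : ℝ, IntervalIntegrable (fun t => σ (t + h) - σ (t - h)) volume a b :=
    fun a b => (hm1.intervalIntegrable).sub (hm2.intervalIntegrable)
  -- decomposition of the truncated integral
  have hI : ∀ R : ℝ, (∫ t in (-R)..R, (σ (t + h) - σ (t - h)))
      = (∫ t in (R - h)..(R + h), σ t) - ∫ t in (-R - h)..(-R + h), σ t := by
    intro R
    rw [intervalIntegral.integral_sub (hm1.intervalIntegrable) (hm2.intervalIntegrable),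
      intervalIntegral.integral_comp_add_right σ h,
      intervalIntegral.integral_comp_sub_right σ h]
    have e1 : (∫ t in (-R + h)..(R - h), σ t) + ∫ t in (R - h)..(R + h), σ t
        = ∫ t in (-R + h)..(R + h), σ t :=
      integral_add_adjacent_intervals hmono.intervalIntegrable hmono.intervalIntegrable
    have e2 : (∫ t in (-R - h)..(-R + h), σ t) + ∫ t in (-R + h)..(R - h), σ t
        = ∫ t in (-R - h)..(R - h), σ t :=
      integral_add_adjacent_intervals hmono.intervalIntegrable hmono.intervalIntegrable
    linarith
  -- the right end
  have hA : Tendsto (fun R : ℝ => ∫ t in (R - h)..(R + h), σ t) atTop (nhds (2 * h * L)) := by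
    have hlow : Tendsto (fun R : ℝ => 2 * h * σ (R - h)) atTop (nhds (2 * h * L)) :=
      ((hL.comp (tendsto_atTop_add_const_right atTop (-h) tendsto_id)).const_mul (2 * h)).congr
        (fun R => by simp only [Function.comp_apply, id_eq]; ring_nf)
    have hup : Tendsto (fun R : ℝ => 2 * h * σ (R + h)) atTop (nhds (2 * h * L)) :=
      (hL.comp (tendsto_atTop_add_const_right atTop h tendsto_id)).const_mul (2 * h)
    refine tendsto_of_tendsto_of_tendsto_of_le_of_le hlow hup ?_ ?_
    · intro R
      have hle : R - h ≤ R + h := by linarith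
      have := intervalIntegral.integral_mono_on hle (intervalIntegrable_const : IntervalIntegrable _ volume _ _)
        hmono.intervalIntegrable (fun x hx => hmono hx.1)
      simp only [intervalIntegral.integral_const, smul_eq_mul] at this
      exact le_trans (le_of_eq (by ring)) this
    · intro R
      have hle : R - h ≤ R + h := by linarith
      have := intervalIntegral.integral_mono_on hle hmono.intervalIntegrable
        (intervalIntegrable_const : IntervalIntegrable _ volume _ _) (fun x hx => hmono hx.2)
      simp only [intervalIntegral.integral_const, smul_eq_mul] at this
      exact le_trans this (le_of_eq (by ring))
  -- the left end
  have hB : Tendsto (fun R : ℝ => ∫ t in (-R - h)..(-R + h), σ t) atTop (nhds (2 * h * ℓ)) := by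
    have tneg : Tendsto (fun R : ℝ => -R) atTop atBot := tendsto_neg_atTop_atBot
    have hlow : Tendsto (fun R : ℝ => 2 * h * σ (-R - h)) atTop (nhds (2 * h * ℓ)) :=
      (hl.comp (tendsto_atBot_add_const_right atTop (-h) tneg)).const_mul (2 * h) |>.congr
        (fun R => by simp only [Function.comp_apply, id_eq]; ring_nf)
    have hup : Tendsto (fun R : ℝ => 2 * h * σ (-R + h)) atTop (nhds (2 * h * ℓ)) :=
      (hl.comp (tendsto_atBot_add_const_right atTop h tneg)).const_mul (2 * h)
    refine tendsto_of_tendsto_of_tendsto_of_le_of_le hlow hup ?_ ?_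
    · intro R
      have hle : -R - h ≤ -R + h := by linarith
      have := intervalIntegral.integral_mono_on hle (intervalIntegrable_const : IntervalIntegrable _ volume _ _)
        hmono.intervalIntegrable (fun x hx => hmono hx.1)
      simp only [intervalIntegral.integral_const, smul_eq_mul] at this
      exact le_trans (le_of_eq (by ring)) this
    · intro R
      have hle : -R - h ≤ -R + h := by linarith
      have := intervalIntegral.integral_mono_on hle hmono.intervalIntegrable
        (intervalIntegrable_const : IntervalIntegrable _ volume _ _) (fun x hx => hmono hx.2)
      simp only [intervalIntegral.integral_const, smul_eq_mul] at this
      exact le_trans this (le_of_eq (by ring))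
  have hlim : Tendsto (fun R : ℝ => ∫ t in (-R)..R, (σ (t + h) - σ (t - h))) atTop
      (nhds (2 * h * (L - ℓ))) := by
    have := hA.sub hB
    rw [show 2 * h * L - 2 * h * ℓ = 2 * h * (L - ℓ) by ring] at this
    exact this.congr (fun R => (hI R).symm)
  have hint : Integrable (fun t => σ (t + h) - σ (t - h)) := by
    refine integrable_of_intervalIntegral_norm_tendsto (2 * h * (L - ℓ))
      (fun R : ℝ => ((hii (-R) R).1)) tendsto_neg_atTop_atBot tendsto_id ?_
    refine hlim.congr fun R => ?_
    exact intervalIntegral.integral_congr (fun x _ => (Real.norm_of_nonneg (gnn x)).symm)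
  refine ⟨hint, tendsto_nhds_unique
    (intervalIntegral_tendsto_integral hint tendsto_neg_atTop_atBot tendsto_id) hlim⟩

/-- For a nondecreasing generalized sigmoidal function, the `n`-fold composition of its
`B`-function is integrable on `ℝⁿ` with integral exactly `1`. -/
theorem stmt_11 (n : ℕ) (hn : 1 ≤ n) (σ : ℝ → ℝ) (hmono : Monotone σ) (L ℓ α xm xp : ℝ)
    (hbdd : ∃ M : ℝ, ∀ x : ℝ, |σ x| ≤ M)
    (hL : Tendsto σ atTop (nhds L)) (hl : Tendsto σ atBot (nhds ℓ)) (hLl : L ≠ ℓ)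
    (hα : 0 < α) (hxm : xm < 0) (hxp : 0 < xp)
    (htailm : ∃ C : ℝ, ∀ x : ℝ, x < xm → |σ x - ℓ| ≤ C * |x| ^ (-(1 + α)))
    (htailp : ∃ C : ℝ, ∀ x : ℝ, xp < x → |L - σ x| ≤ C * |x| ^ (-(1 + α)))
    (B : ℝ → ℝ → ℝ)
    (hB : ∀ x h : ℝ, B x h = (1 / (2 * (L - ℓ))) * (σ (x + h) - σ (x - h)))
    (𝓑 : (m : ℕ) → (Fin m → ℝ) → ℝ)
    (h1 : ∀ x : Fin 1 → ℝ, 𝓑 1 x = B (x 0) 1)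
    (hstep : ∀ (m : ℕ) (x : Fin (m + 2) → ℝ),
      𝓑 (m + 2) x = B (x (Fin.last (m + 1))) (𝓑 (m + 1) (Fin.init x))) :
    Integrable (𝓑 n) ∧ (∫ x : Fin n → ℝ, 𝓑 n x) = 1 := by
  obtain ⟨m, rfl⟩ : ∃ m, n = m + 1 := ⟨n - 1, (Nat.succ_pred_eq_of_pos hn).symm⟩
  have hσL : ∀ x, σ x ≤ L := fun x =>
    ge_of_tendsto hL (eventually_atTop.2 ⟨x, fun y hy => hmono hy⟩)
  have hσl : ∀ x, ℓ ≤ σ x := fun x =>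
    le_of_tendsto hl (eventually_atBot.2 ⟨x, fun y hy => hmono hy⟩)
  have hlL : ℓ < L := lt_of_le_of_ne (le_trans (hσl 0) (hσL 0)) fun e => hLl e.symm
  have hLl0 : L - ℓ ≠ 0 := by linarith
  have hσm : Measurable σ := hmono.measurable
  have hBkey : ∀ h : ℝ, 0 ≤ h →
      Integrable (fun a => B a h) ∧ (∫ a, B a h) = h := by
    intro h hh
    have k := sig_key hmono hL hl h hh
    have hfun : (fun a => B a h)
        = fun a => (1 / (2 * (L - ℓ))) * (σ (a + h) - σ (a - h)) :=
      funext fun a => hB a h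
    constructor
    · rw [hfun]; exact k.1.const_mul _
    · rw [hfun, MeasureTheory.integral_const_mul, k.2]; field_simp
  have hBnn : ∀ a h : ℝ, 0 ≤ h → 0 ≤ B a h := by
    intro a h hh
    rw [hB]
    exact mul_nonneg (div_nonneg zero_le_one (by linarith)) (sub_nonneg.2 (hmono (by linarith)))
  suffices H : ∀ m : ℕ, Measurable (𝓑 (m + 1)) ∧ (∀ x, 0 ≤ 𝓑 (m + 1) x) ∧
      Integrable (𝓑 (m + 1)) ∧ (∫ x : Fin (m + 1) → ℝ, 𝓑 (m + 1) x) = 1 by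
    exact ⟨(H m).2.2.1, (H m).2.2.2⟩
  intro m
  induction m with
  | zero =>
    set e := MeasurableEquiv.funUnique (Fin 1) ℝ with he
    have hcomp : 𝓑 1 = (fun a : ℝ => B a 1) ∘ e := funext fun x => h1 x
    have hBm : Measurable fun a : ℝ => B a 1 := by
      have : (fun a : ℝ => B a 1)
          = fun a => (1 / (2 * (L - ℓ))) * (σ (a + 1) - σ (a - 1)) := funext fun a => hB a 1
      rw [this]
      exact (((hσm.comp (measurable_add_const 1)).sub
        (hσm.comp (measurable_sub_const 1))).const_mul _)
    have mp := volume_preserving_funUnique (Fin 1) ℝ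
    refine ⟨hcomp ▸ hBm.comp e.measurable, fun x => (h1 x) ▸ hBnn _ 1 zero_le_one, ?_, ?_⟩
    · rw [hcomp]
      exact (mp.integrable_comp_emb e.measurableEmbedding).2 (hBkey 1 zero_le_one).1
    · rw [hcomp]
      have := mp.integral_comp e.measurableEmbedding (fun a : ℝ => B a 1)
      rw [Function.comp_def]; exact this.trans (hBkey 1 zero_le_one).2
  | succ k ih =>
    obtain ⟨hmeas, hnn, hint, hval⟩ := ih
    set e := MeasurableEquiv.piFinSuccAbove (fun _ : Fin (k + 2) => ℝ) (Fin.last (k + 1)) with he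
    set F : ℝ × (Fin (k + 1) → ℝ) → ℝ := fun p => B p.1 (𝓑 (k + 1) p.2) with hF
    have hcomp : 𝓑 (k + 2) = F ∘ e := by
      funext x
      show 𝓑 (k + 2) x = B (e x).1 (𝓑 (k + 1) (e x).2)
      rw [hstep]
      have h1' : (e x).1 = x (Fin.last (k + 1)) := rfl
      have h2' : (e x).2 = Fin.init x := by
        funext j
        show x ((Fin.last (k + 1)).succAbove j) = Fin.init x j
        rw [Fin.succAbove_last]
        rfl
      rw [h1', h2']
    have hFmeas : Measurable F := by
      have : F = fun p => (1 / (2 * (L - ℓ)))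
          * (σ (p.1 + 𝓑 (k + 1) p.2) - σ (p.1 - 𝓑 (k + 1) p.2)) := funext fun p => hB _ _
      rw [this]
      exact (((hσm.comp (measurable_fst.add (hmeas.comp measurable_snd))).sub
        (hσm.comp (measurable_fst.sub (hmeas.comp measurable_snd)))).const_mul _)
    have hFint : Integrable F ((volume : Measure ℝ).prod volume) := by
      refine (integrable_prod_iff' hFmeas.aestronglyMeasurable).2 ⟨?_, ?_⟩
      · exact Eventually.of_forall fun y => (hBkey (𝓑 (k + 1) y) (hnn y)).1
      · have hnorm : (fun y => ∫ a, ‖F (a, y)‖) = 𝓑 (k + 1) := by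
          funext y
          have : (fun a => ‖F (a, y)‖) = fun a => B a (𝓑 (k + 1) y) :=
            funext fun a => Real.norm_of_nonneg (hBnn a _ (hnn y))
          rw [this, (hBkey _ (hnn y)).2]
        rw [hnorm]; exact hint
    have mp := volume_preserving_piFinSuccAbove (fun _ : Fin (k + 2) => ℝ) (Fin.last (k + 1))
    refine ⟨hcomp ▸ hFmeas.comp e.measurable, ?_, ?_, ?_⟩
    · intro x; rw [hstep]; exact hBnn _ _ (hnn _)
    · rw [hcomp]
      exact (mp.integrable_comp_emb e.measurableEmbedding).2 hFint
    · rw [hcomp]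
      have h1'' := mp.integral_comp e.measurableEmbedding F
      rw [Function.comp_def, h1'']
      have h2'' : (∫ p, F p) = ∫ y, ∫ a, F (a, y) := integral_prod_symm F hFint
      rw [h2'']
      have h3 : (fun y => ∫ a, F (a, y)) = 𝓑 (k + 1) :=
        funext fun y => (hBkey _ (hnn y)).2
      rw [h3, hval]
end

section
/- Let α ∈ ℝ and let σ be the exponential linear unit, σ(x) := α(e^x − 1) for x ≤ 0 and σ(x) := x for x > 0. For h ∈ ℝ define the second central difference D(x,h) := σ(x + h) − 2σ(x) + σ(x − h). Then: (i) D(·,h) ∈ L¹(ℝ) with ∫_ℝ D(x,h) dx = h²; (ii) ∫_ℝ |D(x,h)| dx ≤ h² + 2|α||h| + 2|α|(e^{−|h|} − 1)²; and (iii) for |h| ≤ 1, |D(x,h)| ≤ max{1 + 4|α|, 2 + |α|} for all x ∈ ℝ. -/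
open MeasureTheory Set

noncomputable def elu (α x : ℝ) : ℝ := if x ≤ 0 then α * (Real.exp x - 1) else x

noncomputable def sdf (α h x : ℝ) : ℝ := elu α (x + h) - 2 * elu α x + elu α (x - h)

lemma elu_cont (α : ℝ) : Continuous (elu α) := by
  unfold elu
  apply Continuous.if_le (by continuity) continuous_id continuous_id continuous_const
  intro x hx
  have : x = 0 := hx
  simp [this]

lemma sdf_cont (α h : ℝ) : Continuous (sdf α h) := by
  unfold sdf
  exact (((elu_cont α).comp (continuous_id.add continuous_const)).sub
    (continuous_const.mul (elu_cont α))).add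
    ((elu_cont α).comp (continuous_id.sub continuous_const))

variable {α h x : ℝ}

lemma r1 (hh : 0 ≤ h) (hx : x ≤ -h) :
    sdf α h x = α * (Real.exp h + Real.exp (-h) - 2) * Real.exp x := by
  unfold sdf elu
  rw [if_pos (by linarith), if_pos (by linarith), if_pos (by linarith)]
  rw [show x + h = x - (-h) by ring, Real.exp_sub, Real.exp_sub, Real.exp_neg h]
  have := Real.exp_ne_zero h
  field_simp
  ring

lemma r2 (hh : 0 ≤ h) (hx1 : -h < x) (hx2 : x ≤ 0) :
    sdf α h x = (x + h) + α * (1 - (2 - Real.exp (-h)) * Real.exp x) := by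
  unfold sdf elu
  rw [if_neg (by linarith), if_pos (by linarith), if_pos (by linarith)]
  rw [Real.exp_sub, Real.exp_neg h]
  have := Real.exp_ne_zero h
  field_simp
  ring

lemma r3 (hh : 0 ≤ h) (hx1 : 0 < x) (hx2 : x ≤ h) :
    sdf α h x = (h - x) + α * (Real.exp (-h) * Real.exp x - 1) := by
  unfold sdf elu
  rw [if_neg (by linarith), if_neg (by linarith), if_pos (by linarith)]
  rw [Real.exp_sub, Real.exp_neg h]
  have := Real.exp_ne_zero h
  field_simp
  ring

lemma r4 (hh : 0 ≤ h) (hx : h < x) : sdf α h x = 0 := by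
  unfold sdf elu
  rw [if_neg (by linarith), if_neg (by linarith), if_neg (by linarith)]
  ring

lemma key_int (a b c lo hi : ℝ) :
    ∫ x in lo..hi, (a + b * x + c * Real.exp x) =
      a * (hi - lo) + b * (hi ^ 2 - lo ^ 2) / 2 + c * (Real.exp hi - Real.exp lo) := by
  have h1 : IntervalIntegrable (fun x : ℝ => a + b * x) volume lo hi :=
    (continuous_const.add (continuous_const.mul continuous_id)).intervalIntegrable lo hi
  have h2 : IntervalIntegrable (fun x : ℝ => c * Real.exp x) volume lo hi :=
    (continuous_const.mul Real.continuous_exp).intervalIntegrable lo hi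
  have h3 : IntervalIntegrable (fun x : ℝ => b * x) volume lo hi :=
    (continuous_const.mul continuous_id).intervalIntegrable lo hi
  rw [intervalIntegral.integral_add h1 h2, intervalIntegral.integral_add
    (intervalIntegrable_const) h3, intervalIntegral.integral_const,
    intervalIntegral.integral_const_mul, intervalIntegral.integral_const_mul,
    integral_id, integral_exp]
  rw [smul_eq_mul]
  ring

set_option maxHeartbeats 2000000 in
lemma aux (α h : ℝ) (hh : 0 ≤ h) :
    Integrable (sdf α h) ∧ (∫ x : ℝ, sdf α h x) = h ^ 2 ∧
    (∫ x : ℝ, |sdf α h x|) ≤ h ^ 2 + 2 * |α| * h + 2 * |α| * (Real.exp (-h) - 1) ^ 2 ∧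
    (h ≤ 1 → ∀ x : ℝ, |sdf α h x| ≤ 1 + 4 * |α|) := by
  set E := Real.exp (-h) with hEdef
  have hE0 : 0 < E := Real.exp_pos _
  have hE1 : E ≤ 1 := Real.exp_le_one_iff.mpr (by linarith)
  have hEh : Real.exp h * E = 1 := by rw [hEdef, ← Real.exp_add]; simp
  have hK : 0 ≤ Real.exp h + E - 2 := by nlinarith [Real.exp_pos h]
  have hKE : (Real.exp h + E - 2) * E = (1 - E) ^ 2 := by nlinarith
  -- integrability on pieces
  have I1 : IntegrableOn (sdf α h) (Iic (-h)) := by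
    have : IntegrableOn (fun x => α * (Real.exp h + E - 2) * Real.exp x) (Iic (-h)) :=
      (integrableOn_exp_Iic (-h)).const_mul _
    exact this.congr_fun (fun x hx => (r1 hh hx).symm) measurableSet_Iic
  have I2 : IntegrableOn (sdf α h) (Ioc (-h) h) := (sdf_cont α h).integrableOn_Ioc
  have I3 : IntegrableOn (sdf α h) (Ioi h) :=
    (integrableOn_zero (ε' := ℝ)).congr_fun (fun x hx => (r4 hh hx).symm) measurableSet_Ioi
  have hInt : Integrable (sdf α h) := by
    rw [← integrableOn_univ, ← Iic_union_Ioi (a := -h)]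
    refine I1.union ?_
    rw [← Ioc_union_Ioi_eq_Ioi (by linarith : -h ≤ h)]
    exact I2.union I3
  -- splitting lemma
  have split : ∀ g : ℝ → ℝ, Integrable g →
      (∫ x : ℝ, g x) = (∫ x in Iic (-h), g x) + ((∫ x in Ioc (-h) 0, g x)
        + (∫ x in Ioc 0 h, g x)) + (∫ x in Ioi h, g x) := by
    intro g hg
    have mid : (∫ x in Ioc (-h) h, g x) =
        (∫ x in Ioc (-h) 0, g x) + (∫ x in Ioc 0 h, g x) := by
      rw [← intervalIntegral.integral_of_le (by linarith : -h ≤ h),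
        ← intervalIntegral.integral_of_le (by linarith : -h ≤ (0:ℝ)),
        ← intervalIntegral.integral_of_le hh]
      exact (intervalIntegral.integral_add_adjacent_intervals
        hg.intervalIntegrable hg.intervalIntegrable).symm
    rw [← intervalIntegral.integral_Iic_add_Ioi hg.integrableOn hg.integrableOn, ← mid,
      ← Ioc_union_Ioi_eq_Ioi (by linarith : -h ≤ h),
      setIntegral_union (Ioc_disjoint_Ioi le_rfl) measurableSet_Ioi
        hg.integrableOn hg.integrableOn]
    ring
  -- piece values
  have P1 : (∫ x in Iic (-h), sdf α h x) = α * (Real.exp h + E - 2) * E := by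
    rw [setIntegral_congr_fun measurableSet_Iic (fun x hx => r1 hh hx),
      MeasureTheory.integral_const_mul, integral_exp_Iic]
  have r2' : ∀ x ∈ Ioc (-h) (0:ℝ),
      sdf α h x = (h + α) + 1 * x + (-(α * (2 - E))) * Real.exp x := by
    intro x hx; rw [r2 hh hx.1 hx.2]; ring
  have r3' : ∀ x ∈ Ioc (0:ℝ) h,
      sdf α h x = (h - α) + (-1) * x + (α * E) * Real.exp x := by
    intro x hx; rw [r3 hh hx.1 hx.2]; ring
  have P2 : (∫ x in Ioc (-h) 0, sdf α h x) =
      (h + α) * (0 - -h) + 1 * ((0:ℝ) ^ 2 - (-h) ^ 2) / 2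
        + (-(α * (2 - E))) * (Real.exp 0 - Real.exp (-h)) := by
    rw [setIntegral_congr_fun measurableSet_Ioc r2',
      ← intervalIntegral.integral_of_le (by linarith : -h ≤ (0:ℝ)), key_int]
  have P3 : (∫ x in Ioc 0 h, sdf α h x) =
      (h - α) * (h - 0) + (-1) * (h ^ 2 - (0:ℝ) ^ 2) / 2
        + (α * E) * (Real.exp h - Real.exp 0) := by
    rw [setIntegral_congr_fun measurableSet_Ioc r3',
      ← intervalIntegral.integral_of_le hh, key_int]
  have P4 : (∫ x in Ioi h, sdf α h x) = 0 := by
    rw [setIntegral_congr_fun measurableSet_Ioi (fun x hx => r4 hh hx), integral_zero]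
  have hval : (∫ x : ℝ, sdf α h x) = h ^ 2 := by
    rw [split _ hInt, P1, P2, P3, P4, Real.exp_zero, ← hEdef]
    linear_combination (2 * α) * hEh
  refine ⟨hInt, hval, ?_, ?_⟩
  · -- L¹ bound
    have hAbs : Integrable (fun x => |sdf α h x|) := hInt.abs
    rw [split _ hAbs]
    have A1 : (∫ x in Iic (-h), |sdf α h x|) = |α| * (Real.exp h + E - 2) * E := by
      rw [setIntegral_congr_fun measurableSet_Iic (fun x hx => by
        rw [r1 hh hx, abs_mul, abs_mul, abs_of_nonneg hK,
          abs_of_nonneg (Real.exp_pos x).le]),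
        MeasureTheory.integral_const_mul, integral_exp_Iic]
    have A2 : (∫ x in Ioc (-h) 0, |sdf α h x|) ≤ h ^ 2 / 2 + |α| * h := by
      have hb : ∀ x ∈ Ioc (-h) (0:ℝ),
          |sdf α h x| ≤ (h + |α|) + 1 * x + 0 * Real.exp x := by
        intro x hx
        rw [r2 hh hx.1 hx.2]
        have he1 : Real.exp x ≤ 1 := Real.exp_le_one_iff.mpr hx.2
        have he0 : 0 < Real.exp x := Real.exp_pos x
        have habs : |1 - (2 - E) * Real.exp x| ≤ 1 :=
          abs_le.mpr ⟨by nlinarith, by nlinarith⟩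
        calc |(x + h) + α * (1 - (2 - E) * Real.exp x)|
            ≤ |x + h| + |α * (1 - (2 - E) * Real.exp x)| := abs_add_le _ _
          _ ≤ (x + h) + |α| * 1 := by
              rw [abs_of_nonneg (by linarith [hx.1] : (0:ℝ) ≤ x + h), abs_mul]
              exact add_le_add le_rfl (mul_le_mul_of_nonneg_left habs (abs_nonneg α))
          _ = (h + |α|) + 1 * x + 0 * Real.exp x := by ring
      calc (∫ x in Ioc (-h) 0, |sdf α h x|)
          ≤ ∫ x in Ioc (-h) 0, ((h + |α|) + 1 * x + 0 * Real.exp x) :=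
            setIntegral_mono_on hAbs.integrableOn
              (((continuous_const.add (continuous_const.mul continuous_id)).add
                (continuous_const.mul Real.continuous_exp)).integrableOn_Ioc)
              measurableSet_Ioc hb
        _ = (h + |α|) * (0 - -h) + 1 * ((0:ℝ) ^ 2 - (-h) ^ 2) / 2
            + 0 * (Real.exp 0 - Real.exp (-h)) := by
            rw [← intervalIntegral.integral_of_le (by linarith : -h ≤ (0:ℝ)), key_int]
        _ = h ^ 2 / 2 + |α| * h := by ring
    have A3 : (∫ x in Ioc 0 h, |sdf α h x|) ≤ h ^ 2 / 2 + |α| * h := by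
      have hb : ∀ x ∈ Ioc (0:ℝ) h,
          |sdf α h x| ≤ (h + |α|) + (-1) * x + 0 * Real.exp x := by
        intro x hx
        rw [r3 hh hx.1 hx.2]
        have he1 : Real.exp x ≤ Real.exp h := Real.exp_le_exp.mpr hx.2
        have he0 : 0 < Real.exp x := Real.exp_pos x
        have habs : |E * Real.exp x - 1| ≤ 1 := by
          refine abs_le.mpr ⟨by nlinarith, by nlinarith⟩
        calc |(h - x) + α * (E * Real.exp x - 1)|
            ≤ |h - x| + |α * (E * Real.exp x - 1)| := abs_add_le _ _
          _ ≤ (h - x) + |α| * 1 := by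
              rw [abs_of_nonneg (by linarith [hx.2] : (0:ℝ) ≤ h - x), abs_mul]
              exact add_le_add le_rfl (mul_le_mul_of_nonneg_left habs (abs_nonneg α))
          _ = (h + |α|) + (-1) * x + 0 * Real.exp x := by ring
      calc (∫ x in Ioc 0 h, |sdf α h x|)
          ≤ ∫ x in Ioc 0 h, ((h + |α|) + (-1) * x + 0 * Real.exp x) :=
            setIntegral_mono_on hAbs.integrableOn
              (((continuous_const.add (continuous_const.mul continuous_id)).add
                (continuous_const.mul Real.continuous_exp)).integrableOn_Ioc)
              measurableSet_Ioc hb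
        _ = (h + |α|) * (h - 0) + (-1) * (h ^ 2 - (0:ℝ) ^ 2) / 2
            + 0 * (Real.exp h - Real.exp 0) := by
            rw [← intervalIntegral.integral_of_le hh, key_int]
        _ = h ^ 2 / 2 + |α| * h := by ring
    have A4 : (∫ x in Ioi h, |sdf α h x|) = 0 := by
      rw [setIntegral_congr_fun measurableSet_Ioi (fun x hx => by
        rw [r4 hh hx, abs_zero]), integral_zero]
    rw [A1, A4]
    have hfin : |α| * (Real.exp h + E - 2) * E ≤ 2 * |α| * (E - 1) ^ 2 :=
      calc |α| * (Real.exp h + E - 2) * E = |α| * ((1 - E) ^ 2) := by rw [mul_assoc, hKE]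
        _ ≤ 2 * |α| * (E - 1) ^ 2 := by
            nlinarith [mul_nonneg (abs_nonneg α) (sq_nonneg (E - 1))]
    linarith [A2, A3]
  · -- pointwise bound
    intro h1 x
    rcases le_or_gt x (-h) with c1 | c1
    · rw [r1 hh c1, abs_mul, abs_mul, abs_of_nonneg hK, abs_of_nonneg (Real.exp_pos x).le]
      have hex : Real.exp x ≤ E := Real.exp_le_exp.mpr c1
      have h2 : (0:ℝ) ≤ 1 - (1 - E) ^ 2 := by nlinarith
      calc |α| * (Real.exp h + E - 2) * Real.exp x
          ≤ |α| * (Real.exp h + E - 2) * E :=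
            mul_le_mul_of_nonneg_left hex (mul_nonneg (abs_nonneg α) hK)
        _ = |α| * (1 - E) ^ 2 := by rw [mul_assoc, hKE]
        _ ≤ 1 + 4 * |α| := by nlinarith [mul_nonneg (abs_nonneg α) h2, abs_nonneg α]
    · rcases le_or_gt x 0 with c2 | c2
      · rw [r2 hh c1 c2]
        have he1 : Real.exp x ≤ 1 := Real.exp_le_one_iff.mpr c2
        have he0 : 0 < Real.exp x := Real.exp_pos x
        have habs : |1 - (2 - E) * Real.exp x| ≤ 1 :=
          abs_le.mpr ⟨by nlinarith, by nlinarith⟩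
        calc |(x + h) + α * (1 - (2 - E) * Real.exp x)|
            ≤ |x + h| + |α * (1 - (2 - E) * Real.exp x)| := abs_add_le _ _
          _ ≤ (x + h) + |α| * 1 := by
              rw [abs_of_nonneg (by linarith : (0:ℝ) ≤ x + h), abs_mul]
              exact add_le_add le_rfl (mul_le_mul_of_nonneg_left habs (abs_nonneg α))
          _ ≤ 1 + 4 * |α| := by nlinarith [abs_nonneg α]
      · rcases le_or_gt x h with c3 | c3
        · rw [r3 hh c2 c3]
          have he1 : Real.exp x ≤ Real.exp h := Real.exp_le_exp.mpr c3
          have he0 : 0 < Real.exp x := Real.exp_pos x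
          have habs : |E * Real.exp x - 1| ≤ 1 :=
            abs_le.mpr ⟨by nlinarith, by nlinarith⟩
          calc |(h - x) + α * (E * Real.exp x - 1)|
              ≤ |h - x| + |α * (E * Real.exp x - 1)| := abs_add_le _ _
            _ ≤ (h - x) + |α| * 1 := by
                rw [abs_of_nonneg (by linarith : (0:ℝ) ≤ h - x), abs_mul]
                exact add_le_add le_rfl (mul_le_mul_of_nonneg_left habs (abs_nonneg α))
            _ ≤ 1 + 4 * |α| := by nlinarith [abs_nonneg α]
        · rw [r4 hh c3, abs_zero]
          nlinarith [abs_nonneg α]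

/-- Properties of the second central difference of the exponential linear unit (ELU):
integrability with integral `h²`, an `L¹` bound, and a uniform bound for `|h| ≤ 1`. -/
theorem stmt_12 (α : ℝ) (σ : ℝ → ℝ)
    (hσ : ∀ x : ℝ, σ x = if x ≤ 0 then α * (Real.exp x - 1) else x)
    (D : ℝ → ℝ → ℝ)
    (hD : ∀ x h : ℝ, D x h = σ (x + h) - 2 * σ x + σ (x - h)) :
    ∀ h : ℝ,
      Integrable (fun x => D x h) ∧
      (∫ x : ℝ, D x h) = h ^ 2 ∧
      (∫ x : ℝ, |D x h|) ≤ h ^ 2 + 2 * |α| * |h| + 2 * |α| * (Real.exp (-|h|) - 1) ^ 2 ∧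
      (|h| ≤ 1 → ∀ x : ℝ, |D x h| ≤ max (1 + 4 * |α|) (2 + |α|)) := by
  intro h
  obtain ⟨kI, kV, kA, kP⟩ := aux α |h| (abs_nonneg h)
  have hfun : ∀ x, D x h = sdf α |h| x := by
    intro x
    rcases abs_choice h with hc | hc
    · rw [hD, hσ, hσ, hσ, hc]; rfl
    · rw [hD, hσ, hσ, hσ, hc]
      show _ = elu α (x + -h) - 2 * elu α x + elu α (x - -h)
      rw [show x + -h = x - h by ring, show x - -h = x + h by ring]
      simp only [elu]
      ring
  have e1 : (fun x => D x h) = sdf α |h| := funext hfun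
  refine ⟨by rw [e1]; exact kI, ?_, ?_, ?_⟩
  · rw [show (∫ x : ℝ, D x h) = ∫ x : ℝ, sdf α |h| x by simp only [hfun], kV, sq_abs]
  · rw [show (∫ x : ℝ, |D x h|) = ∫ x : ℝ, |sdf α |h| x| by simp only [hfun], ← sq_abs h]
    exact kA
  · intro hle x
    rw [hfun x]
    exact (kP hle x).trans (le_max_left _ _)
end

section
/- Let σ(x) := x · tanh(log(1 + e^x)) be the Mish activation. Then its second derivative σ'' : ℝ → ℝ is continuous, bounded (there exists M > 0 with |σ''(x)| ≤ M for all x ∈ ℝ), and Lebesgue integrable, i.e., σ'' ∈ L¹(ℝ). -/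
open MeasureTheory

noncomputable def mishD (x : ℝ) : ℝ := Real.exp x ^ 2 + 2 * Real.exp x + 2

noncomputable def mf1 (x : ℝ) : ℝ :=
  ((Real.exp x ^ 2 + 2 * Real.exp x) * mishD x
      + 2 * x * (2 * Real.exp x * Real.exp x + 2 * Real.exp x)) / (mishD x) ^ 2

noncomputable def mf2 (x : ℝ) : ℝ :=
  (4 * (2 * Real.exp x ^ 2 + 2 * Real.exp x) * mishD x
      + 2 * x * ((4 * Real.exp x ^ 2 + 2 * Real.exp x) * mishD x
        - 2 * (2 * Real.exp x ^ 2 + 2 * Real.exp x) ^ 2)) / (mishD x) ^ 3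

lemma mishD_pos (x : ℝ) : 0 < mishD x := by
  have := Real.exp_pos x
  unfold mishD; positivity

lemma mishD_ne (x : ℝ) : mishD x ≠ 0 := (mishD_pos x).ne'

lemma tanh_log_eq (x : ℝ) :
    Real.tanh (Real.log (1 + Real.exp x))
      = (Real.exp x ^ 2 + 2 * Real.exp x) / mishD x := by
  have ht : 0 < Real.exp x := Real.exp_pos x
  have h1 : (0:ℝ) < 1 + Real.exp x := by linarith
  rw [Real.tanh_eq_sinh_div_cosh, Real.sinh_eq, Real.cosh_eq, Real.exp_neg,
    Real.exp_log h1]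
  have h2 : (1 + Real.exp x) ≠ 0 := h1.ne'
  have h3 : mishD x ≠ 0 := mishD_ne x
  unfold mishD at *
  field_simp
  ring

lemma hasDerivAt_D (x : ℝ) :
    HasDerivAt mishD (2 * Real.exp x * Real.exp x + 2 * Real.exp x) x := by
  have hexp := Real.hasDerivAt_exp x
  have h := ((hexp.pow 2).add (hexp.const_mul 2)).add_const 2
  refine h.congr_deriv ?_
  ring

lemma hasDerivAt_A (x : ℝ) :
    HasDerivAt (fun x => Real.exp x ^ 2 + 2 * Real.exp x)
      (2 * Real.exp x * Real.exp x + 2 * Real.exp x) x := by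
  have hexp := Real.hasDerivAt_exp x
  have h := (hexp.pow 2).add (hexp.const_mul 2)
  refine h.congr_deriv ?_
  ring

lemma hasDerivAt_sigma (σ : ℝ → ℝ)
    (hσ : ∀ x : ℝ, σ x = x * Real.tanh (Real.log (1 + Real.exp x))) (x : ℝ) :
    HasDerivAt σ (mf1 x) x := by
  have hσ' : σ = fun x => x * ((Real.exp x ^ 2 + 2 * Real.exp x) / mishD x) := by
    funext y; rw [hσ y, tanh_log_eq y]
  rw [hσ']
  have hQ := (hasDerivAt_A x).div (hasDerivAt_D x) (mishD_ne x)
  have h := (hasDerivAt_id x).mul hQ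
  refine h.congr_deriv ?_
  have h3 : mishD x ≠ 0 := mishD_ne x
  unfold mf1 mishD at *
  simp only [Pi.div_apply, Pi.mul_apply, Pi.add_apply, id_eq]
  field_simp
  ring

lemma hasDerivAt_mf1 (x : ℝ) : HasDerivAt mf1 (mf2 x) x := by
  have hexp := Real.hasDerivAt_exp x
  have hA := hasDerivAt_A x
  have hD := hasDerivAt_D x
  have hD' : HasDerivAt (fun x => 2 * Real.exp x * Real.exp x + 2 * Real.exp x)
      (4 * Real.exp x * Real.exp x + 2 * Real.exp x) x := by
    have h := (((hexp.const_mul 2).mul hexp)).add (hexp.const_mul 2)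
    refine h.congr_deriv ?_
    ring
  have hid : HasDerivAt (fun y : ℝ => 2 * y) 2 x := by
    simpa using (hasDerivAt_id x).const_mul 2
  have hP := (hA.mul hD).add (hid.mul hD')
  have hD2 : HasDerivAt (fun x => (mishD x) ^ 2)
      (2 * mishD x ^ 1 * (2 * Real.exp x * Real.exp x + 2 * Real.exp x)) x := by
    exact_mod_cast hD.pow 2
  have hne : (mishD x) ^ 2 ≠ 0 := pow_ne_zero 2 (mishD_ne x)
  have h := hP.div hD2 hne
  have h3 : mishD x ≠ 0 := mishD_ne x
  unfold mf1
  refine h.congr_deriv ?_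
  unfold mf2 mishD at *
  simp only [Pi.div_apply, Pi.mul_apply, Pi.add_apply, id_eq]
  field_simp
  ring

lemma cont_mf2 : Continuous mf2 := by
  unfold mf2 mishD
  apply Continuous.div
  · fun_prop
  · fun_prop
  · intro x
    exact pow_ne_zero 3 (mishD_ne x)

lemma cube_le_exp {u : ℝ} (hu : 0 ≤ u) : (3 + u) ^ 3 ≤ 27 * Real.exp u := by
  have h1 : u / 3 + 1 ≤ Real.exp (u / 3) := Real.add_one_le_exp _
  have h2 : (0:ℝ) ≤ u / 3 + 1 := by linarith
  have h3 : (u / 3 + 1) ^ 3 ≤ Real.exp (u / 3) ^ 3 := by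
    exact pow_le_pow_left₀ h2 h1 3
  have h4 : Real.exp (u / 3) ^ 3 = Real.exp u := by
    rw [← Real.exp_nat_mul]
    congr 1
    push_cast
    ring
  nlinarith [h3, h4]

set_option maxHeartbeats 1000000 in
lemma bound_mf2 (x : ℝ) : |mf2 x| ≤ 2160 * (1 + x ^ 2)⁻¹ := by
  have ht : 0 < Real.exp x := Real.exp_pos x
  have hD : 0 < mishD x := mishD_pos x
  have hx2 : (0:ℝ) < 1 + x ^ 2 := by positivity
  set t := Real.exp x with htdef
  have hDval : mishD x = t ^ 2 + 2 * t + 2 := rfl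
  rw [mf2, abs_div, abs_of_pos (by positivity : (0:ℝ) < mishD x ^ 3),
    div_le_iff₀ (by positivity : (0:ℝ) < mishD x ^ 3)]
  have hRHS : 2160 * (1 + x ^ 2)⁻¹ * mishD x ^ 3 = (2160 * mishD x ^ 3) / (1 + x ^ 2) := by
    field_simp
  rw [hRHS, le_div_iff₀ hx2]
  rcases le_or_gt x 0 with hx | hx
  · -- x ≤ 0 : t ≤ 1
    have ht1 : t ≤ 1 := Real.exp_le_one_iff.mpr hx
    have hcube : t * (3 + (-x)) ^ 3 ≤ 27 := by
      have := cube_le_exp (u := -x) (by linarith)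
      have hexp : Real.exp (-x) = 1 / t := by
        rw [Real.exp_neg]; simp [htdef]
      rw [hexp] at this
      have := mul_le_mul_of_nonneg_left this ht.le
      calc t * (3 + -x) ^ 3 ≤ t * (27 * (1/t)) := this
        _ = 27 := by field_simp
    have ht2 : t ^ 2 ≤ t := by nlinarith
    have ht3 : t ^ 3 ≤ t ^ 2 := by nlinarith
    have ht4 : t ^ 4 ≤ t ^ 3 := by nlinarith
    have habs : |4 * (2 * t ^ 2 + 2 * t) * mishD x
        + 2 * x * ((4 * t ^ 2 + 2 * t) * mishD x - 2 * (2 * t ^ 2 + 2 * t) ^ 2)|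
        ≤ (80 + 36 * (-x)) * t := by
      rw [abs_le, hDval]
      constructor <;> nlinarith [mul_nonneg (neg_nonneg.2 hx) ht.le, ht2, ht3, ht4,
        mul_le_mul_of_nonneg_left ht2 (neg_nonneg.2 hx),
        mul_le_mul_of_nonneg_left ht3 (neg_nonneg.2 hx),
        mul_le_mul_of_nonneg_left ht4 (neg_nonneg.2 hx)]
    have hpoly : (80 + 36 * (-x)) * (1 + x ^ 2) ≤ 80 * (3 + (-x)) ^ 3 := by
      nlinarith [neg_nonneg.2 hx, sq_nonneg x, mul_nonneg (neg_nonneg.2 hx) (sq_nonneg x)]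
    have hchain : (80 + 36 * (-x)) * t * (1 + x ^ 2) ≤ 2160 := by
      calc (80 + 36 * (-x)) * t * (1 + x ^ 2)
          = ((80 + 36 * (-x)) * (1 + x ^ 2)) * t := by ring
        _ ≤ (80 * (3 + (-x)) ^ 3) * t := by
            exact mul_le_mul_of_nonneg_right hpoly ht.le
        _ = 80 * (t * (3 + (-x)) ^ 3) := by ring
        _ ≤ 80 * 27 := by linarith
        _ = 2160 := by norm_num
    have hD1 : (1:ℝ) ≤ mishD x ^ 3 := by
      rw [hDval]; nlinarith
    calc |4 * (2 * t ^ 2 + 2 * t) * mishD x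
        + 2 * x * ((4 * t ^ 2 + 2 * t) * mishD x - 2 * (2 * t ^ 2 + 2 * t) ^ 2)|
          * (1 + x ^ 2)
        ≤ (80 + 36 * (-x)) * t * (1 + x ^ 2) :=
          mul_le_mul_of_nonneg_right habs hx2.le
      _ ≤ 2160 := hchain
      _ ≤ 2160 * mishD x ^ 3 := by nlinarith
  · -- 0 < x : 1 ≤ t
    have ht1 : 1 ≤ t := Real.one_le_exp hx.le
    have hcube : (3 + x) ^ 3 ≤ 27 * t := cube_le_exp hx.le
    have ht2 : t ≤ t ^ 2 := by nlinarith
    have ht3 : t ^ 2 ≤ t ^ 3 := by nlinarith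
    have ht4 : t ^ 3 ≤ t ^ 4 := by nlinarith
    have hDle : mishD x ≤ 5 * t ^ 2 := by rw [hDval]; nlinarith
    have habs : |4 * (2 * t ^ 2 + 2 * t) * mishD x
        + 2 * x * ((4 * t ^ 2 + 2 * t) * mishD x - 2 * (2 * t ^ 2 + 2 * t) ^ 2)|
        ≤ (80 + 36 * x) * t ^ 4 := by
      rw [abs_le, hDval]
      constructor <;> nlinarith [hx.le, ht2, ht3, ht4,
        mul_le_mul_of_nonneg_left ht2 hx.le,
        mul_le_mul_of_nonneg_left ht3 hx.le,
        mul_le_mul_of_nonneg_left ht4 hx.le,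
        mul_nonneg hx.le ht.le]
    have hpoly : (80 + 36 * x) * (1 + x ^ 2) ≤ 80 * (3 + x) ^ 3 := by
      nlinarith [hx.le, sq_nonneg x, mul_nonneg hx.le (sq_nonneg x)]
    have hDge : t ^ 6 ≤ mishD x ^ 3 := by
      rw [hDval]
      have : t ^ 2 ≤ t ^ 2 + 2 * t + 2 := by linarith
      calc t ^ 6 = (t ^ 2) ^ 3 := by ring
        _ ≤ (t ^ 2 + 2 * t + 2) ^ 3 := by
            exact pow_le_pow_left₀ (by positivity) this 3
    have hchain : (80 + 36 * x) * t ^ 4 * (1 + x ^ 2) ≤ 2160 * t ^ 6 := by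
      have h1 : (80 + 36 * x) * (1 + x ^ 2) ≤ 2160 * t ^ 2 := by
        calc (80 + 36 * x) * (1 + x ^ 2) ≤ 80 * (3 + x) ^ 3 := hpoly
          _ ≤ 80 * (27 * t) := by linarith
          _ ≤ 2160 * t ^ 2 := by nlinarith
      calc (80 + 36 * x) * t ^ 4 * (1 + x ^ 2)
          = ((80 + 36 * x) * (1 + x ^ 2)) * t ^ 4 := by ring
        _ ≤ (2160 * t ^ 2) * t ^ 4 := by
            exact mul_le_mul_of_nonneg_right h1 (by positivity)
        _ = 2160 * t ^ 6 := by ring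
    calc |4 * (2 * t ^ 2 + 2 * t) * mishD x
        + 2 * x * ((4 * t ^ 2 + 2 * t) * mishD x - 2 * (2 * t ^ 2 + 2 * t) ^ 2)|
          * (1 + x ^ 2)
        ≤ (80 + 36 * x) * t ^ 4 * (1 + x ^ 2) :=
          mul_le_mul_of_nonneg_right habs hx2.le
      _ ≤ 2160 * t ^ 6 := hchain
      _ ≤ 2160 * mishD x ^ 3 := by nlinarith

/-- The second derivative of the Mish activation `σ(x) = x tanh(log(1+eˣ))` is continuous,
bounded, and Lebesgue integrable on `ℝ`. -/
theorem stmt_16 (σ : ℝ → ℝ)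
    (hσ : ∀ x : ℝ, σ x = x * Real.tanh (Real.log (1 + Real.exp x))) :
    Continuous (deriv (deriv σ)) ∧
    (∃ M : ℝ, 0 < M ∧ ∀ x : ℝ, |deriv (deriv σ) x| ≤ M) ∧
    Integrable (deriv (deriv σ)) := by
  have hd1 : deriv σ = mf1 := funext fun x => (hasDerivAt_sigma σ hσ x).deriv
  have hd2 : deriv (deriv σ) = mf2 := by
    rw [hd1]; exact funext fun x => (hasDerivAt_mf1 x).deriv
  rw [hd2]
  refine ⟨cont_mf2, ⟨2160, by norm_num, fun x => ?_⟩, ?_⟩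
  · have h := bound_mf2 x
    have hx2 : (0:ℝ) < 1 + x ^ 2 := by positivity
    have : (1 + x ^ 2)⁻¹ ≤ 1 := by
      rw [inv_le_one_iff₀]; right; nlinarith
    nlinarith [abs_nonneg (mf2 x)]
  · have hint : Integrable (fun x : ℝ => 2160 * (1 + x ^ 2)⁻¹) :=
      integrable_inv_one_add_sq.const_mul 2160
    refine hint.mono' cont_mf2.aestronglyMeasurable (ae_of_all _ fun x => ?_)
    simpa [Real.norm_eq_abs] using bound_mf2 x
end

section
/- Let σ(x) := x · tanh(log(1 + e^x)) be the Mish activation and for h ∈ ℝ define B(x,h) := σ(x + h) − 2σ(x) + σ(x − h). Then: (i) there exists M > 0 with |B(x,h)| ≤ M h² for all x, h ∈ ℝ; (ii) ∫_ℝ |B(x,h)| dx ≤ ‖σ''‖_{L¹(ℝ)} h² for all h ∈ ℝ; and (iii) the n-fold composition 𝔅(x₁,…,x_n) := B(x_n, B(x_{n−1}, …, B(x₁,1)…)) belongs to L¹(ℝⁿ). -/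
open MeasureTheory

open scoped ENNReal

section Stmt17Aux
open Real

namespace Stmt17


noncomputable def Dd (x : ℝ) : ℝ := exp x ^ 2 + 2 * exp x + 2
noncomputable def Dp (x : ℝ) : ℝ := 2 * exp x ^ 2 + 2 * exp x
noncomputable def Dpp (x : ℝ) : ℝ := 4 * exp x ^ 2 + 2 * exp x
noncomputable def gg (x : ℝ) : ℝ := 2 * x / Dd x
noncomputable def gg1 (x : ℝ) : ℝ := (2 * Dd x - 2 * x * Dp x) / Dd x ^ 2
noncomputable def gg2 (x : ℝ) : ℝ :=
  (-2 * x * Dpp x * Dd x - 4 * Dd x * Dp x + 4 * x * Dp x ^ 2) / Dd x ^ 3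

lemma Dd_pos (x : ℝ) : 0 < Dd x := by unfold Dd; positivity

lemma hasDerivAt_Dd (x : ℝ) : HasDerivAt Dd (Dp x) x := by
  have h : HasDerivAt (fun x => exp x ^ 2 + 2 * exp x + 2)
      ((2:ℕ) * exp x ^ (2-1) * exp x + 2 * exp x) x :=
    (((Real.hasDerivAt_exp x).pow 2).add ((Real.hasDerivAt_exp x).const_mul 2)).add_const 2
  convert h using 1
  · rfl
  unfold Dp; push_cast; ring

lemma hasDerivAt_Dp (x : ℝ) : HasDerivAt Dp (Dpp x) x := by
  have h : HasDerivAt (fun x => 2 * exp x ^ 2 + 2 * exp x)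
      (2 * ((2:ℕ) * exp x ^ (2-1) * exp x) + 2 * exp x) x :=
    ((((Real.hasDerivAt_exp x).pow 2)).const_mul 2).add ((Real.hasDerivAt_exp x).const_mul 2)
  convert h using 1
  · rfl
  unfold Dpp; push_cast; ring

lemma hasDerivAt_gg (x : ℝ) : HasDerivAt gg (gg1 x) x := by
  have h := ((hasDerivAt_id x).const_mul 2).div (hasDerivAt_Dd x) (Dd_pos x).ne'
  exact h.congr_deriv (by unfold gg1; simp)

lemma hasDerivAt_gg1 (x : ℝ) : HasDerivAt gg1 (gg2 x) x := by
  have hnum : HasDerivAt (fun x => 2 * Dd x - 2 * x * Dp x)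
      (2 * Dp x - (2 * Dp x + 2 * x * Dpp x)) x := by
    have h1 := (hasDerivAt_Dd x).const_mul 2
    have h2 : HasDerivAt (fun x => 2 * x * Dp x) (2 * Dp x + 2 * x * Dpp x) x := by
      have := ((hasDerivAt_id x).const_mul 2).mul (hasDerivAt_Dp x)
      exact this.congr_deriv (by simp)
    exact h1.sub h2
  have hden : HasDerivAt (fun x => Dd x ^ 2) ((2:ℕ) * Dd x ^ (2-1) * Dp x) x := (hasDerivAt_Dd x).pow 2
  have h := hnum.div hden (pow_ne_zero 2 (Dd_pos x).ne')
  refine h.congr_deriv ?_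
  unfold gg2
  have h0 := (Dd_pos x).ne'
  field_simp
  ring


lemma gg2_bound (x : ℝ) : |gg2 x| ≤ 24 * (1 + |x|) * exp (-|x|) := by
  have hE : 0 < exp x := exp_pos x
  have hd : 0 < Dd x := Dd_pos x
  have hDp : 0 ≤ Dp x := by unfold Dp; positivity
  have hDpp : 0 ≤ Dpp x := by unfold Dpp; positivity
  have habs : |gg2 x| = |(-2 * x * Dpp x * Dd x - 4 * Dd x * Dp x + 4 * x * Dp x ^ 2)| / Dd x ^ 3 := by
    rw [gg2, abs_div, abs_of_pos (by positivity : (0:ℝ) < Dd x ^ 3)]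
  rw [habs, div_le_iff₀ (by positivity : (0:ℝ) < Dd x ^ 3)]
  have htri : |(-2 * x * Dpp x * Dd x - 4 * Dd x * Dp x + 4 * x * Dp x ^ 2)| ≤
      2 * |x| * (Dpp x * Dd x) + 4 * (Dd x * Dp x) + 4 * |x| * Dp x ^ 2 := by
    have hax : 0 ≤ |x| + x := by linarith [neg_abs_le x]
    have h1 : 0 ≤ (|x| + x) * (2 * (Dpp x * Dd x)) := by
      apply mul_nonneg hax; positivity
    have hax2 : 0 ≤ |x| - x := by linarith [le_abs_self x]
    have h2 : 0 ≤ (|x| - x) * (4 * Dp x ^ 2) := by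
      apply mul_nonneg hax2; positivity
    have h3 : 0 ≤ 8 * (Dd x * Dp x) := by positivity
    have h4 : 0 ≤ (|x| - x) * (2 * (Dpp x * Dd x)) := by
      apply mul_nonneg hax2; positivity
    have h5 : 0 ≤ (|x| + x) * (4 * Dp x ^ 2) := by apply mul_nonneg hax; positivity
    rw [abs_le]
    constructor <;> nlinarith [abs_nonneg x]
  refine htri.trans ?_
  rcases le_or_gt 0 x with hx | hx
  · rw [abs_of_nonneg hx, exp_neg]
    have hDp2 : Dp x ≤ 2 * Dd x := by unfold Dp Dd; nlinarith
    have hDpp4 : Dpp x ≤ 4 * Dd x := by unfold Dpp Dd; nlinarith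
    have hEDd : exp x ≤ Dd x := by unfold Dd; nlinarith
    have key : (2 * x * (Dpp x * Dd x) + 4 * (Dd x * Dp x) + 4 * x * Dp x ^ 2) * exp x
        ≤ 24 * (1 + x) * Dd x ^ 3 := by
      calc (2 * x * (Dpp x * Dd x) + 4 * (Dd x * Dp x) + 4 * x * Dp x ^ 2) * exp x
          ≤ (2 * x * (4 * Dd x * Dd x) + 4 * (Dd x * (2 * Dd x)) + 4 * x * (2 * Dd x) ^ 2) * Dd x := by
            gcongr
        _ = (8 + 24 * x) * Dd x ^ 3 := by ring
        _ ≤ 24 * (1 + x) * Dd x ^ 3 := by nlinarith [pow_pos hd 3]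
    calc 2 * x * (Dpp x * Dd x) + 4 * (Dd x * Dp x) + 4 * x * Dp x ^ 2
        = (2 * x * (Dpp x * Dd x) + 4 * (Dd x * Dp x) + 4 * x * Dp x ^ 2) * exp x * (exp x)⁻¹ := by
          field_simp
      _ ≤ 24 * (1 + x) * Dd x ^ 3 * (exp x)⁻¹ := by gcongr
      _ = 24 * (1 + x) * (exp x)⁻¹ * Dd x ^ 3 := by ring
  · rw [abs_of_neg hx, neg_neg]
    have hE1 : exp x ≤ 1 := Real.exp_le_one_iff.2 hx.le
    have hDpE : Dp x ≤ 4 * exp x := by unfold Dp; nlinarith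
    have hDppE : Dpp x ≤ 6 * exp x := by unfold Dpp; nlinarith
    have hDd5 : Dd x ≤ 5 := by unfold Dd; nlinarith
    have hDd2 : 2 ≤ Dd x := by unfold Dd; nlinarith
    have hDd8 : 8 ≤ Dd x ^ 3 := by
      calc (8:ℝ) = 2 ^ 3 := by norm_num
        _ ≤ Dd x ^ 3 := by gcongr <;> norm_num
    have hnx : 0 ≤ -x := by linarith
    calc 2 * -x * (Dpp x * Dd x) + 4 * (Dd x * Dp x) + 4 * -x * Dp x ^ 2
        ≤ 2 * -x * (6 * exp x * 5) + 4 * (5 * (4 * exp x)) + 4 * -x * (4 * exp x) ^ 2 := by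
          gcongr
      _ = (-60 * x) * exp x + 80 * exp x + (-64 * x) * (exp x * exp x) := by ring
      _ ≤ (-60 * x) * exp x + 80 * exp x + (-64 * x) * (1 * exp x) := by
          have : (-64 * x) * (exp x * exp x) ≤ (-64 * x) * (1 * exp x) := by
            apply mul_le_mul_of_nonneg_left _ (by linarith)
            apply mul_le_mul_of_nonneg_right hE1 hE.le
          linarith
      _ = (80 - 124 * x) * exp x := by ring
      _ ≤ (24 * (1 + -x) * 8) * exp x := by nlinarith
      _ ≤ (24 * (1 + -x) * Dd x ^ 3) * exp x := by gcongr <;> linarith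
      _ = 24 * (1 + -x) * exp x * Dd x ^ 3 := by ring

lemma gg2_le (x : ℝ) : |gg2 x| ≤ 24 := by
  have h := gg2_bound x
  have h2 : (1 + |x|) * exp (-|x|) ≤ 1 := by
    rw [exp_neg, mul_inv_le_iff₀ (exp_pos _), one_mul]
    have := Real.add_one_le_exp |x|
    linarith
  nlinarith [abs_nonneg (gg2 x)]

lemma gg2_exp (x : ℝ) : |gg2 x| ≤ 48 * exp (-(|x| / 2)) := by
  have h := gg2_bound x
  have hx : 0 ≤ |x| := abs_nonneg x
  have h1 : 1 + |x| ≤ 2 * exp (|x| / 2) := by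
    have h2 : |x| / 2 + 1 ≤ exp (|x| / 2) := Real.add_one_le_exp _
    linarith
  have h3 : (1 + |x|) * exp (-|x|) ≤ 2 * exp (-(|x| / 2)) := by
    have : exp (-|x|) = exp (-(|x| / 2)) * exp (-(|x| / 2)) := by
      rw [← exp_add]; ring_nf
    rw [this]
    have h4 : (1 + |x|) * (exp (-(|x| / 2)) * exp (-(|x| / 2)))
        ≤ (2 * exp (|x| / 2)) * (exp (-(|x| / 2)) * exp (-(|x| / 2))) := by
      apply mul_le_mul_of_nonneg_right h1 (by positivity)
    have h5 : (2 * exp (|x| / 2)) * (exp (-(|x| / 2)) * exp (-(|x| / 2)))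
        = 2 * exp (-(|x| / 2)) := by
      rw [mul_assoc, ← exp_add, ← exp_add]
      congr 1
      ring
    linarith
  nlinarith [exp_pos (-(|x| / 2))]


lemma continuous_Dd : Continuous Dd := by unfold Dd; fun_prop
lemma continuous_Dp : Continuous Dp := by unfold Dp; fun_prop
lemma continuous_Dpp : Continuous Dpp := by unfold Dpp; fun_prop

lemma continuous_gg1 : Continuous gg1 := by
  have hne : ∀ x : ℝ, Dd x ^ 2 ≠ 0 := fun x => pow_ne_zero 2 (Dd_pos x).ne'
  unfold gg1 Dd Dp at *
  exact Continuous.div (by fun_prop) (by fun_prop) hne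

lemma continuous_gg2 : Continuous gg2 := by
  have hne : ∀ x : ℝ, Dd x ^ 3 ≠ 0 := fun x => pow_ne_zero 3 (Dd_pos x).ne'
  unfold gg2 Dd Dp Dpp at *
  exact Continuous.div (by fun_prop) (by fun_prop) hne

lemma mish_eq (x : ℝ) : x * Real.tanh (Real.log (1 + Real.exp x)) = x - gg x := by
  have hu : (0:ℝ) < 1 + Real.exp x := by positivity
  have h1 : Real.exp (Real.log (1 + Real.exp x)) = 1 + Real.exp x := Real.exp_log hu
  have h2 : Real.exp (-Real.log (1 + Real.exp x)) = (1 + Real.exp x)⁻¹ := by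
    rw [Real.exp_neg, h1]
  have hD : Dd x > 0 := Dd_pos x
  unfold gg Dd at *
  rw [Real.tanh_eq_sinh_div_cosh, Real.sinh_eq, Real.cosh_eq, h1, h2]
  field_simp
  ring

lemma gg1_sub_eq (a b : ℝ) : gg1 b - gg1 a = ∫ s in a..b, gg2 s :=
  (intervalIntegral.integral_eq_sub_of_hasDerivAt
    (fun s _ => hasDerivAt_gg1 s)
    (continuous_gg2.intervalIntegrable a b)).symm

lemma uIoc_abs_le {h t : ℝ} (ht : t ∈ Set.uIoc 0 h) : |t| ≤ |h| := by
  rcases le_total 0 h with h0 | h0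
  · rw [Set.uIoc_of_le h0] at ht
    rw [abs_of_pos ht.1, abs_of_nonneg h0]; exact ht.2
  · rw [Set.uIoc_of_ge h0] at ht
    rw [abs_of_nonpos ht.2, abs_of_nonpos h0]; linarith [ht.1]

lemma arg_lower {x h s t : ℝ} (hs : s ∈ Set.uIoc 0 h) (ht : t ∈ Set.uIoc 0 h) :
    |x| - |h| ≤ |s + (t + x - h)| := by
  have key : |s + t - h| ≤ |h| := by
    rcases le_total 0 h with h0 | h0
    · rw [Set.uIoc_of_le h0] at hs ht
      rw [abs_le, abs_of_nonneg h0]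
      constructor <;> [linarith [hs.1, ht.1]; linarith [hs.2, ht.2]]
    · rw [Set.uIoc_of_ge h0] at hs ht
      rw [abs_le, abs_of_nonpos h0]
      constructor <;> [linarith [hs.1, ht.1]; linarith [hs.2, ht.2]]
  have e : x = (s + (t + x - h)) - (s + t - h) := by ring
  have htr : |x| ≤ |s + (t + x - h)| + |s + t - h| := by
    calc |x| = |(s + (t + x - h)) - (s + t - h)| := by rw [← e]
      _ ≤ |s + (t + x - h)| + |s + t - h| := abs_sub _ _
  linarith

section Bsec
variable {σ : ℝ → ℝ} (hσ : ∀ x : ℝ, σ x = x * Real.tanh (Real.log (1 + Real.exp x)))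
variable {B : ℝ → ℝ → ℝ} (hB : ∀ x h : ℝ, B x h = σ (x + h) - 2 * σ x + σ (x - h))

include hσ in
lemma sigma_sub_eq (a b : ℝ) : σ b - σ a = ∫ t in a..b, (1 - gg1 t) := by
  have hs : ∀ t, HasDerivAt σ (1 - gg1 t) t := by
    intro t
    have h1 : HasDerivAt (fun y => y - gg y) (1 - gg1 t) t :=
      (hasDerivAt_id t).sub (hasDerivAt_gg t)
    have hfun : σ = fun y => y - gg y := funext fun y => by rw [hσ y, mish_eq]
    rw [hfun]
    exact h1
  exact (intervalIntegral.integral_eq_sub_of_hasDerivAt (fun t _ => hs t)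
    ((continuous_const.sub continuous_gg1).intervalIntegrable a b)).symm

include hσ hB in
lemma B_eq (x h : ℝ) :
    B x h = -∫ t in (0:ℝ)..h, ∫ s in (0:ℝ)..h, gg2 (s + (t + x - h)) := by
  have hc1 : Continuous fun t : ℝ => 1 - gg1 t := continuous_const.sub continuous_gg1
  have hc2 : Continuous fun t : ℝ => 1 - gg1 (t - h) :=
    continuous_const.sub (continuous_gg1.comp (continuous_sub_right h))
  have key : B x h = ∫ t in x..(x+h), (gg1 (t - h) - gg1 t) := by
    rw [hB]
    have e1 : σ (x+h) - 2 * σ x + σ (x - h) = (σ (x+h) - σ x) - (σ x - σ (x-h)) := by ring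
    rw [e1, sigma_sub_eq hσ x (x+h), sigma_sub_eq hσ (x-h) x]
    have e2 : (∫ t in (x-h)..x, (1 - gg1 t)) = ∫ t in x..(x+h), (1 - gg1 (t - h)) := by
      rw [intervalIntegral.integral_comp_sub_right (fun t => 1 - gg1 t) h]
      norm_num
    rw [e2, ← intervalIntegral.integral_sub (hc1.intervalIntegrable _ _)
      (hc2.intervalIntegrable _ _)]
    apply intervalIntegral.integral_congr
    intro t _
    ring
  rw [key]
  have e3 : ∀ t : ℝ, gg1 (t - h) - gg1 t = -∫ s in (0:ℝ)..h, gg2 (s + (t - h)) := by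
    intro t
    rw [intervalIntegral.integral_comp_add_right (fun s => gg2 s) (t - h)]
    rw [show (0:ℝ) + (t - h) = t - h by ring, show h + (t - h) = t by ring]
    rw [← gg1_sub_eq]
    ring
  rw [intervalIntegral.integral_congr (fun t _ => e3 t), intervalIntegral.integral_neg]
  congr 1
  have e4 := intervalIntegral.integral_comp_add_right (a := (0:ℝ)) (b := h)
    (fun t => ∫ s in (0:ℝ)..h, gg2 (s + (t - h))) x
  rw [zero_add, show h + x = x + h by ring] at e4
  exact e4.symm

include hσ hB in
lemma abs_B_le {x h C : ℝ}
    (hC : ∀ t ∈ Set.uIoc 0 h, ∀ s ∈ Set.uIoc 0 h, |gg2 (s + (t + x - h))| ≤ C) :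
    |B x h| ≤ C * h ^ 2 := by
  rw [B_eq hσ hB, abs_neg]
  have inner : ∀ t ∈ Set.uIoc 0 h, ‖∫ s in (0:ℝ)..h, gg2 (s + (t + x - h))‖ ≤ C * |h| := by
    intro t ht
    have := intervalIntegral.norm_integral_le_of_norm_le_const
      (C := C) (f := fun s => gg2 (s + (t + x - h))) (a := 0) (b := h)
      (fun s hs => hC t ht s hs)
    simpa using this
  have houter := intervalIntegral.norm_integral_le_of_norm_le_const inner
  rw [Real.norm_eq_abs] at houter
  calc |∫ t in (0:ℝ)..h, ∫ s in (0:ℝ)..h, gg2 (s + (t + x - h))|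
      ≤ C * |h| * |h - 0| := houter
    _ = C * h ^ 2 := by rw [sub_zero, show C * |h| * |h| = C * (|h| * |h|) by ring,
        abs_mul_abs_self, sq]

include hσ hB in
lemma B_le_quadratic (x h : ℝ) : |B x h| ≤ 24 * h ^ 2 :=
  abs_B_le hσ hB (fun t _ s _ => gg2_le _)

include hσ hB in
lemma B_le_master (x h : ℝ) :
    |B x h| ≤ 48 * Real.exp (|h| / 2) * Real.exp (-(|x| / 2)) * h ^ 2 := by
  apply abs_B_le hσ hB
  intro t ht s hs
  calc |gg2 (s + (t + x - h))| ≤ 48 * Real.exp (-(|s + (t + x - h)| / 2)) := gg2_exp _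
    _ ≤ 48 * Real.exp (-((|x| - |h|) / 2)) := by
        gcongr
        exact arg_lower (x := x) hs ht
    _ = 48 * Real.exp (|h| / 2) * Real.exp (-(|x| / 2)) := by
        rw [mul_assoc, ← Real.exp_add]
        congr 2
        ring

end Bsec

lemma continuous_gg : Continuous gg := by
  have hne : ∀ x : ℝ, Dd x ≠ 0 := fun x => (Dd_pos x).ne'
  unfold gg Dd at *
  exact Continuous.div (by fun_prop) (by fun_prop) hne

lemma integrable_e : Integrable (fun t : ℝ => Real.exp (-(|t| / 2))) := by
  have hIoi : IntegrableOn (fun t : ℝ => Real.exp (-(|t| / 2))) (Set.Ioi 0) := by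
    refine (exp_neg_integrableOn_Ioi 0 (by norm_num : (0:ℝ) < 1/2)).congr_fun
      (fun t ht => ?_) measurableSet_Ioi
    rw [abs_of_pos ht]
    congr 1
    ring
  have hIic : IntegrableOn (fun t : ℝ => Real.exp (-(|t| / 2))) (Set.Iic 0) := by
    rw [← Measure.map_neg_eq_self (volume : Measure ℝ)]
    have m : MeasurableEmbedding fun x : ℝ => -x := (Homeomorph.neg ℝ).measurableEmbedding
    rw [m.integrableOn_map_iff]
    simp_rw [Function.comp_def, abs_neg, Set.neg_preimage, Set.neg_Iic, neg_zero]
    exact (integrableOn_Ici_iff_integrableOn_Ioi (b := 0) (f := fun t : ℝ => Real.exp (-(|t| / 2)))).mpr hIoi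
  rw [← integrableOn_univ, ← Set.Iic_union_Ioi (a := (0:ℝ))]
  exact hIic.union hIoi

lemma integrable_abs_gg2 : Integrable (fun y : ℝ => |gg2 y|) := by
  refine Integrable.mono (integrable_e.const_mul 48)
    continuous_gg2.abs.aestronglyMeasurable (ae_of_all _ fun y => ?_)
  rw [Real.norm_eq_abs, Real.norm_eq_abs, abs_abs]
  exact (gg2_exp y).trans (le_abs_self _)

section PartTwo
variable {σ : ℝ → ℝ} (hσ : ∀ x : ℝ, σ x = x * Real.tanh (Real.log (1 + Real.exp x)))
variable {B : ℝ → ℝ → ℝ} (hB : ∀ x h : ℝ, B x h = σ (x + h) - 2 * σ x + σ (x - h))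

include hσ hB in
lemma part2_nonneg (h : ℝ) (hh : 0 ≤ h) :
    (∫ x : ℝ, |B x h|) ≤ (∫ x : ℝ, |gg2 x|) * h ^ 2 := by
  classical
  set I : Set ℝ := Set.Ioc (0:ℝ) h with hIdef
  have hIvol : volume I = ENNReal.ofReal h := by rw [hIdef, Real.volume_Ioc, sub_zero]
  set w : ℝ → ℝ≥0∞ := fun y => ENNReal.ofReal |gg2 y| with hwdef
  have hwm : Measurable w := continuous_gg2.abs.measurable.ennreal_ofReal
  have hJ : (∫⁻ y, w y) = ENNReal.ofReal (∫ y, |gg2 y|) :=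
    (ofReal_integral_eq_lintegral_ofReal integrable_abs_gg2
      (ae_of_all _ fun y => abs_nonneg _)).symm
  -- pointwise bound
  have hinner_repr : ∀ t x : ℝ, (∫ s in (0:ℝ)..h, gg2 (s + (t + x - h)))
      = gg1 (h + (t + x - h)) - gg1 (t + x - h) := by
    intro t x
    rw [intervalIntegral.integral_comp_add_right (fun s => gg2 s) (t + x - h), zero_add,
      ← gg1_sub_eq]
  have hpt : ∀ x : ℝ, ENNReal.ofReal |B x h|
      ≤ ∫⁻ t in I, ∫⁻ s in I, w (s + (t + x - h)) := by
    intro x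
    have hcontinner : Continuous fun t : ℝ => gg1 (h + (t + x - h)) - gg1 (t + x - h) := by
      have h1 : Continuous fun t : ℝ => h + (t + x - h) := by fun_prop
      have h2 : Continuous fun t : ℝ => t + x - h := by fun_prop
      exact (continuous_gg1.comp h1).sub (continuous_gg1.comp h2)
    calc ENNReal.ofReal |B x h|
        ≤ ENNReal.ofReal (∫ t in I, |∫ s in (0:ℝ)..h, gg2 (s + (t + x - h))|) := by
          apply ENNReal.ofReal_le_ofReal
          rw [B_eq hσ hB x h, abs_neg, intervalIntegral.integral_of_le hh]
          have := norm_integral_le_integral_norm (μ := volume.restrict I)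
            (f := fun t => ∫ s in (0:ℝ)..h, gg2 (s + (t + x - h)))
          simpa [Real.norm_eq_abs] using this
      _ = ∫⁻ t in I, ENNReal.ofReal |∫ s in (0:ℝ)..h, gg2 (s + (t + x - h))| := by
          rw [ofReal_integral_eq_lintegral_ofReal]
          · have : (fun t => |∫ s in (0:ℝ)..h, gg2 (s + (t + x - h))|)
                = fun t => |gg1 (h + (t + x - h)) - gg1 (t + x - h)| := by
              funext t; rw [hinner_repr t x]
            rw [this]
            exact hcontinner.abs.integrableOn_Ioc
          · exact ae_of_all _ fun t => abs_nonneg _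
      _ ≤ ∫⁻ t in I, ∫⁻ s in I, w (s + (t + x - h)) := by
          refine lintegral_mono fun t => ?_
          calc ENNReal.ofReal |∫ s in (0:ℝ)..h, gg2 (s + (t + x - h))|
              ≤ ENNReal.ofReal (∫ s in I, |gg2 (s + (t + x - h))|) := by
                apply ENNReal.ofReal_le_ofReal
                rw [intervalIntegral.integral_of_le hh]
                have := norm_integral_le_integral_norm (μ := volume.restrict I)
                  (f := fun s => gg2 (s + (t + x - h)))
                simpa [Real.norm_eq_abs] using this
            _ = ∫⁻ s in I, w (s + (t + x - h)) := by
                rw [ofReal_integral_eq_lintegral_ofReal]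
                · exact (continuous_gg2.comp (by fun_prop)).abs.integrableOn_Ioc
                · exact ae_of_all _ fun s => abs_nonneg _
  -- the lintegral chain
  have hmeas1 : AEMeasurable (Function.uncurry fun x t => ∫⁻ s in I, w (s + (t + x - h)))
      ((volume : Measure ℝ).prod (volume.restrict I)) := by
    apply Measurable.aemeasurable
    apply Measurable.lintegral_prod_right' (f := fun q : (ℝ × ℝ) × ℝ => w (q.2 + (q.1.2 + q.1.1 - h)))
    apply hwm.comp
    fun_prop
  have chain : (∫⁻ x, ENNReal.ofReal |B x h|)
      ≤ ENNReal.ofReal ((∫ y, |gg2 y|) * h ^ 2) := by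
    calc (∫⁻ x, ENNReal.ofReal |B x h|)
        ≤ ∫⁻ x, ∫⁻ t in I, ∫⁻ s in I, w (s + (t + x - h)) := lintegral_mono hpt
      _ = ∫⁻ t in I, ∫⁻ x, ∫⁻ s in I, w (s + (t + x - h)) := lintegral_lintegral_swap hmeas1
      _ = ∫⁻ t in I, ∫⁻ s in I, ∫⁻ x, w (s + (t + x - h)) := by
          refine lintegral_congr fun t => ?_
          refine lintegral_lintegral_swap ?_
          apply Measurable.aemeasurable
          apply hwm.comp
          fun_prop
      _ = ∫⁻ t in I, ∫⁻ s in I, (∫⁻ x, w x) := by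
          refine lintegral_congr fun t => lintegral_congr fun s => ?_
          have e : (fun x : ℝ => w (s + (t + x - h))) = fun x => w (x + (s + t - h)) :=
            funext fun x => congrArg w (by ring)
          rw [e]
          exact lintegral_add_right_eq_self w (s + t - h)
      _ = (∫⁻ x, w x) * ENNReal.ofReal h * ENNReal.ofReal h := by
          rw [setLIntegral_const, setLIntegral_const, hIvol]
      _ = ENNReal.ofReal ((∫ y, |gg2 y|) * h ^ 2) := by
          rw [hJ, ← ENNReal.ofReal_mul (integral_nonneg fun y => abs_nonneg _),
            ← ENNReal.ofReal_mul (mul_nonneg (integral_nonneg fun y => abs_nonneg _) hh)]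
          congr 1
          ring
  -- conclude
  have hσcont : Continuous σ := by
    have hfun : σ = fun y => y - gg y := funext fun y => by rw [hσ y, mish_eq]
    rw [hfun]
    exact continuous_id.sub continuous_gg
  have hBcont : Continuous fun x => B x h := by
    have : (fun x => B x h) = fun x => σ (x + h) - 2 * σ x + σ (x - h) :=
      funext fun x => hB x h
    rw [this]
    exact ((hσcont.comp (continuous_add_right h)).sub (continuous_const.mul hσcont)).add
      (hσcont.comp (continuous_sub_right h))
  have habs : (∫ x, |B x h|) = (∫⁻ x, ENNReal.ofReal |B x h|).toReal := by
    rw [integral_eq_lintegral_of_nonneg_ae (ae_of_all _ fun x => abs_nonneg _)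
      hBcont.abs.aestronglyMeasurable]
  rw [habs]
  calc (∫⁻ x, ENNReal.ofReal |B x h|).toReal
      ≤ (ENNReal.ofReal ((∫ y, |gg2 y|) * h ^ 2)).toReal :=
        ENNReal.toReal_mono ENNReal.ofReal_ne_top chain
    _ = (∫ y, |gg2 y|) * h ^ 2 := ENNReal.toReal_ofReal
        (mul_nonneg (integral_nonneg fun y => abs_nonneg _) (by positivity))

include hσ hB in
lemma part2 (h : ℝ) :
    (∫ x : ℝ, |B x h|) ≤ (∫ x : ℝ, |gg2 x|) * h ^ 2 := by
  rcases le_or_gt 0 h with hh | hh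
  · exact part2_nonneg hσ hB h hh
  · have hsym : ∀ x : ℝ, B x h = B x (-h) := fun x => by rw [hB, hB]; ring_nf
    have e : (∫ x : ℝ, |B x h|) = ∫ x : ℝ, |B x (-h)| := by
      congr 1
      funext x
      rw [hsym x]
    rw [e, show h ^ 2 = (-h) ^ 2 by ring]
    exact part2_nonneg hσ hB (-h) (by linarith)

include hσ in
lemma deriv2_sigma : deriv (deriv σ) = fun x => -gg2 x := by
  have hfun : σ = fun y => y - gg y := funext fun y => by rw [hσ y, mish_eq]
  have hd1 : deriv σ = fun x => 1 - gg1 x := by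
    funext x
    rw [hfun]
    exact (((hasDerivAt_id x).sub (hasDerivAt_gg x)).deriv)
  rw [hd1]
  funext x
  have := ((hasDerivAt_const x (1:ℝ)).sub (hasDerivAt_gg1 x)).deriv
  exact this.trans (by ring)

end PartTwo

section PartThree
variable {σ : ℝ → ℝ} (hσ : ∀ x : ℝ, σ x = x * Real.tanh (Real.log (1 + Real.exp x)))
variable {B : ℝ → ℝ → ℝ} (hB : ∀ x h : ℝ, B x h = σ (x + h) - 2 * σ x + σ (x - h))

include hσ in
lemma continuous_sigma : Continuous σ := by
  have hfun : σ = fun y => y - gg y := funext fun y => by rw [hσ y, mish_eq]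
  rw [hfun]
  exact continuous_id.sub continuous_gg

include hσ hB in
lemma continuous_B : Continuous fun p : ℝ × ℝ => B p.1 p.2 := by
  have hσc := continuous_sigma hσ
  have e : (fun p : ℝ × ℝ => B p.1 p.2)
      = fun p => σ (p.1 + p.2) - 2 * σ p.1 + σ (p.1 - p.2) := funext fun p => hB p.1 p.2
  rw [e]
  exact ((hσc.comp (continuous_fst.add continuous_snd)).sub
    (continuous_const.mul (hσc.comp continuous_fst))).add
    (hσc.comp (continuous_fst.sub continuous_snd))

variable {𝓑 : (m : ℕ) → (Fin m → ℝ) → ℝ}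
  (h1 : ∀ x : Fin 1 → ℝ, 𝓑 1 x = B (x 0) 1)
  (hstep : ∀ (m : ℕ) (x : Fin (m + 2) → ℝ),
      𝓑 (m + 2) x = B (x (Fin.last (m + 1))) (𝓑 (m + 1) (Fin.init x)))

include hσ hB h1 hstep in
lemma part3 (m : ℕ) : ∃ C : ℝ, 0 < C ∧ Continuous (𝓑 (m+1)) ∧
    ∀ x : Fin (m+1) → ℝ, |𝓑 (m+1) x| ≤ C * ∏ i, Real.exp (-(|x i| / 2)) := by
  have hBc := continuous_B hσ hB
  induction m with
  | zero =>
    refine ⟨48 * Real.exp (1 / 2), by positivity, ?_, ?_⟩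
    · have e : 𝓑 1 = fun x => B (x 0) 1 := funext h1
      rw [e]
      have hp : Continuous fun x : Fin 1 → ℝ => ((x 0 : ℝ), (1 : ℝ)) :=
        (continuous_apply (0 : Fin 1)).prodMk continuous_const
      exact hBc.comp hp
    · intro x
      rw [h1 x, Fin.prod_univ_one]
      have := B_le_master hσ hB (x 0) 1
      rw [abs_one, one_pow, mul_one] at this
      exact this
  | succ k ih =>
    obtain ⟨C, hC, hcont, hbd⟩ := ih
    have hprodle : ∀ y : Fin (k+1) → ℝ, (∏ i, Real.exp (-(|y i| / 2))) ≤ 1 := fun y =>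
      Finset.prod_le_one (fun i _ => (Real.exp_pos _).le)
        (fun i _ => Real.exp_le_one_iff.2 (neg_nonpos.mpr (by positivity)))
    have habsle : ∀ y, |𝓑 (k+1) y| ≤ C := fun y =>
      (hbd y).trans (mul_le_of_le_one_right hC.le (hprodle y))
    refine ⟨48 * Real.exp (C / 2) * C ^ 2, by positivity, ?_, ?_⟩
    · have e : 𝓑 (k+2) = fun x => B (x (Fin.last (k+1))) (𝓑 (k+1) (Fin.init x)) :=
        funext (hstep k)
      rw [e]
      have hinit : Continuous fun x : Fin (k+2) → ℝ => Fin.init x :=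
        continuous_pi fun i => continuous_apply i.castSucc
      have hp : Continuous fun x : Fin (k+2) → ℝ =>
          ((x (Fin.last (k+1)) : ℝ), 𝓑 (k+1) (Fin.init x)) :=
        (continuous_apply (Fin.last (k+1))).prodMk (hcont.comp hinit)
      exact hBc.comp hp
    · intro x
      rw [hstep k x]
      have h2 := B_le_master hσ hB (x (Fin.last (k+1))) (𝓑 (k+1) (Fin.init x))
      have hhle : |𝓑 (k+1) (Fin.init x)| ≤ C := habsle _
      have hhle2 : |𝓑 (k+1) (Fin.init x)| ≤ C * ∏ i, Real.exp (-(|Fin.init x i| / 2)) :=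
        hbd _
      have hsq : (𝓑 (k+1) (Fin.init x)) ^ 2
          ≤ C * (C * ∏ i, Real.exp (-(|Fin.init x i| / 2))) := by
        calc (𝓑 (k+1) (Fin.init x)) ^ 2
            = |𝓑 (k+1) (Fin.init x)| * |𝓑 (k+1) (Fin.init x)| := by
              rw [abs_mul_abs_self, sq]
          _ ≤ C * (C * ∏ i, Real.exp (-(|Fin.init x i| / 2))) :=
              mul_le_mul hhle hhle2 (abs_nonneg _) hC.le
      calc |B (x (Fin.last (k+1))) (𝓑 (k+1) (Fin.init x))|
          ≤ 48 * Real.exp (|𝓑 (k+1) (Fin.init x)| / 2)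
            * Real.exp (-(|x (Fin.last (k+1))| / 2)) * (𝓑 (k+1) (Fin.init x)) ^ 2 := h2
        _ ≤ 48 * Real.exp (C / 2) * Real.exp (-(|x (Fin.last (k+1))| / 2))
            * (C * (C * ∏ i, Real.exp (-(|Fin.init x i| / 2)))) := by
            gcongr
        _ = (48 * Real.exp (C / 2) * C ^ 2)
            * ((∏ i, Real.exp (-(|Fin.init x i| / 2)))
              * Real.exp (-(|x (Fin.last (k+1))| / 2))) := by ring
        _ = (48 * Real.exp (C / 2) * C ^ 2) * ∏ i : Fin (k+2), Real.exp (-(|x i| / 2)) := by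
            rw [Fin.prod_univ_castSucc (f := fun i : Fin (k+2) => Real.exp (-(|x i| / 2)))]
            rfl

end PartThree

end Stmt17
end Stmt17Aux


/-- Properties of the second central difference `B(x,h)` of the Mish activation:
a uniform bound `M h²`, an `L¹` bound `‖σ''‖_{L¹} h²`, and integrability on `ℝⁿ` of the
`n`-fold composition. -/
theorem stmt_17 (n : ℕ) (hn : 1 ≤ n) (σ : ℝ → ℝ)
    (hσ : ∀ x : ℝ, σ x = x * Real.tanh (Real.log (1 + Real.exp x)))
    (B : ℝ → ℝ → ℝ)
    (hB : ∀ x h : ℝ, B x h = σ (x + h) - 2 * σ x + σ (x - h))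
    (𝓑 : (m : ℕ) → (Fin m → ℝ) → ℝ)
    (h1 : ∀ x : Fin 1 → ℝ, 𝓑 1 x = B (x 0) 1)
    (hstep : ∀ (m : ℕ) (x : Fin (m + 2) → ℝ),
      𝓑 (m + 2) x = B (x (Fin.last (m + 1))) (𝓑 (m + 1) (Fin.init x))) :
    (∃ M : ℝ, 0 < M ∧ ∀ x h : ℝ, |B x h| ≤ M * h ^ 2) ∧
    (∀ h : ℝ, (∫ x : ℝ, |B x h|) ≤ (∫ x : ℝ, |deriv (deriv σ) x|) * h ^ 2) ∧
    Integrable (𝓑 n) := by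
  obtain ⟨m, rfl⟩ : ∃ m, n = m + 1 := ⟨n - 1, (Nat.succ_pred_eq_of_pos hn).symm⟩
  refine ⟨⟨24, by norm_num, fun x h => Stmt17.B_le_quadratic hσ hB x h⟩, ?_, ?_⟩
  · intro h
    have e : (∫ x : ℝ, |deriv (deriv σ) x|) = ∫ x : ℝ, |Stmt17.gg2 x| := by
      congr 1
      funext x
      rw [Stmt17.deriv2_sigma hσ]
      exact abs_neg _
    rw [e]
    exact Stmt17.part2 hσ hB h
  · obtain ⟨C, hC, hcont, hbd⟩ := Stmt17.part3 hσ hB h1 hstep m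
    have hg : Integrable fun x : Fin (m+1) → ℝ =>
        C * ∏ i, Real.exp (-(|x i| / 2)) :=
      (Integrable.fintype_prod
        (f := fun (_ : Fin (m+1)) (t : ℝ) => Real.exp (-(|t| / 2)))
        (fun _ => Stmt17.integrable_e)).const_mul C
    refine hg.mono hcont.aestronglyMeasurable (ae_of_all _ fun x => ?_)
    rw [Real.norm_eq_abs, Real.norm_eq_abs]
    exact (hbd x).trans (le_abs_self _)
end
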